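/- arXiv:2006.15365 — 2 statements merged into one kernel-verified Lean document; each statement's English description precedes it below -/
import Mathlib

section
/- Let F be a homogeneous form of degree δ in N+1 variables over a valued field K, and B ∈ GL_{N+1}(K). Then log‖F(B·X)‖ ≤ log‖F‖ + δ·log‖B‖ + δ·log⁺|N+1| + δ·log⁺|2| + N·log⁺|2|, where ‖B‖ is the entry sup norm and ‖F‖ the coefficient sup norm. -/
open MvPolynomial

/-- The sup norm of the coefficients of a multivariate polynomial over a normed field. -/
noncomputable def coeffNorm {σ K : Type*} [NormedField K] (F : MvPolynomial σ K) : ℝ :=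
  ((F.support.sup fun m => ‖F.coeff m‖₊ : NNReal) : ℝ)

/-- Entrywise sup norm of a square matrix over a normed field. -/
noncomputable def matNorm {K : Type*} [NormedField K] {n : ℕ}
    (M : Matrix (Fin n) (Fin n) K) : ℝ :=
  (((Finset.univ ×ˢ Finset.univ).sup fun p : Fin n × Fin n => ‖M p.1 p.2‖₊ : NNReal) : ℝ)

namespace Stmt7Aux

open Finset

lemma le_of_pow_le_poly_mul_pow {a b c : ℝ} {d : ℕ} (hb : 0 < b) (hc : 0 < c)
    (h : ∀ k : ℕ, 1 ≤ k → a ^ k ≤ c * ((k + 1 : ℕ) : ℝ) ^ d * b ^ k) : a ≤ b := by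
  by_contra hab
  push_neg at hab
  have hr : 1 < a / b := (one_lt_div hb).2 hab
  have hlo := isLittleO_pow_const_const_pow_of_one_lt (R := ℝ) d hr
  rw [Asymptotics.isLittleO_iff] at hlo
  have hε : (0:ℝ) < 1 / (c * 2 ^ d + 1) := by positivity
  obtain ⟨k0, hk0⟩ := Filter.eventually_atTop.mp (hlo hε)
  set k := max k0 1 with hk
  have hk1 : 1 ≤ k := le_max_right _ _
  have h1 := hk0 k (le_max_left _ _)
  have h2 := h k hk1
  have hbk : (0:ℝ) < b ^ k := pow_pos hb k
  have hq : (a / b) ^ k ≤ c * ((k + 1 : ℕ) : ℝ) ^ d := by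
    rw [div_pow, div_le_iff₀ hbk]
    exact h2
  have hkd : ((k + 1 : ℕ) : ℝ) ^ d ≤ 2 ^ d * (k : ℝ) ^ d := by
    rw [← mul_pow]
    apply pow_le_pow_left₀ (by positivity)
    have : (1:ℝ) ≤ (k:ℝ) := by exact_mod_cast hk1
    push_cast
    nlinarith
  have hpos : (0:ℝ) < (a / b) ^ k := pow_pos (lt_trans one_pos hr) k
  have hnorm : ‖((k:ℝ)) ^ d‖ = (k:ℝ) ^ d := by
    rw [Real.norm_eq_abs, abs_of_nonneg (by positivity)]
  have hnorm2 : ‖(a / b) ^ k‖ = (a / b) ^ k := by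
    rw [Real.norm_eq_abs, abs_of_pos hpos]
  rw [hnorm, hnorm2] at h1
  have hlt : c * 2 ^ d * (1 / (c * 2 ^ d + 1)) < 1 := by
    rw [mul_one_div]
    apply div_lt_one (by positivity) |>.mpr
    linarith
  nlinarith [mul_le_mul_of_nonneg_left h1 (show (0:ℝ) ≤ c * 2 ^ d by positivity)]

variable {K : Type*} [NormedField K]

lemma norm_natCast_le_self (m : ℕ) : ‖(m : K)‖ ≤ m := by
  simpa using Nat.norm_cast_le (α := K) m

lemma digit_bound (n : ℕ) (hn : 1 ≤ n) :
    ∀ (l t : ℕ), t ≤ n ^ l → ‖(t : K)‖ ≤ ((l:ℝ) + 1) * n * (max ‖(n:K)‖ 1) ^ l := by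
  set A := max ‖(n:K)‖ 1 with hA
  have hA1 : (1:ℝ) ≤ A := le_max_right _ _
  have hnA : ‖(n:K)‖ ≤ A := le_max_left _ _
  intro l
  induction l with
  | zero =>
    intro t ht
    simp only [pow_zero] at ht ⊢
    have := norm_natCast_le_self (K := K) t
    have ht1 : (t:ℝ) ≤ 1 := by exact_mod_cast ht
    have hn1 : (1:ℝ) ≤ n := by exact_mod_cast hn
    nlinarith
  | succ l ih =>
    intro t ht
    have hdiv : t / n ≤ n ^ l := by
      have h := Nat.div_le_div_right (c := n) ht
      rwa [pow_succ, Nat.mul_div_cancel _ (by omega)] at h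
    have hmod : t % n < n := Nat.mod_lt _ (by omega)
    have heq : ((t : K)) = (n : K) * ((t / n : ℕ) : K) + ((t % n : ℕ) : K) := by
      conv_lhs => rw [← Nat.div_add_mod t n]
      push_cast
      ring
    have h1 : ‖(t : K)‖ ≤ ‖(n:K)‖ * ‖((t / n : ℕ) : K)‖ + ‖((t % n : ℕ) : K)‖ := by
      rw [heq]
      exact (norm_add_le _ _).trans (by rw [norm_mul])
    have h2 := ih (t / n) hdiv
    have h3 : ‖((t % n : ℕ) : K)‖ ≤ n := by
      refine (norm_natCast_le_self _).trans ?_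
      exact_mod_cast hmod.le
    have hApow : (1:ℝ) ≤ A ^ (l + 1) := one_le_pow₀ hA1
    rw [pow_succ] at hApow
    have hnorm_nonneg : (0:ℝ) ≤ ‖((t / n : ℕ) : K)‖ := norm_nonneg _
    have hn0 : (0:ℝ) ≤ n := Nat.cast_nonneg n
    have hAl : (0:ℝ) < A ^ l := by positivity
    push_cast
    calc ‖(t : K)‖ ≤ ‖(n:K)‖ * ‖((t / n : ℕ) : K)‖ + ‖((t % n : ℕ) : K)‖ := h1
      _ ≤ A * (((l:ℝ) + 1) * n * A ^ l) + n := by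
          have := mul_le_mul hnA h2 hnorm_nonneg (le_trans zero_le_one hA1)
          nlinarith
      _ ≤ ((l:ℝ) + 1 + 1) * n * A ^ (l + 1) := by
          rw [pow_succ]
          nlinarith [hApow, hn0]

lemma norm_natCast_le_max_pow (n : ℕ) (hn : 1 ≤ n) (k m : ℕ) (hm : m ≤ n ^ k) :
    ‖(m : K)‖ ≤ (max ‖(n:K)‖ 1) ^ k := by
  set A := max ‖(n:K)‖ 1 with hA
  have hA1 : (1:ℝ) ≤ A := le_max_right _ _
  have hb : (0:ℝ) < A ^ k := by positivity
  have hn1 : (1:ℝ) ≤ (n:ℝ) := by exact_mod_cast hn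
  refine le_of_pow_le_poly_mul_pow (c := n * (k + 1)) (d := 1) hb (by positivity) ?_
  intro j hj
  have e1 : ‖(m : K)‖ ^ j = ‖((m ^ j : ℕ) : K)‖ := by
    rw [Nat.cast_pow, norm_pow]
  have e2 : m ^ j ≤ n ^ (k * j) := by
    rw [pow_mul]
    exact Nat.pow_le_pow_left hm j
  have e3 := digit_bound (K := K) n hn (k * j) (m ^ j) e2
  rw [e1]
  refine e3.trans ?_
  rw [show (max ‖(n:K)‖ 1) ^ (k * j) = (A ^ k) ^ j by rw [← hA, ← pow_mul]]
  have h4 : (((k * j : ℕ):ℝ) + 1) * n ≤ (n * (k+1)) * ((j + 1 : ℕ):ℝ) := by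
    push_cast
    nlinarith [Nat.cast_nonneg (α := ℝ) k, Nat.cast_nonneg (α := ℝ) j]
  have hpow : (0:ℝ) ≤ (A ^ k) ^ j := by positivity
  calc (((k * j : ℕ):ℝ) + 1) * n * (A ^ k) ^ j
      ≤ ((n * (k+1)) * ((j + 1 : ℕ):ℝ)) * (A ^ k) ^ j :=
        mul_le_mul_of_nonneg_right h4 hpow
    _ = (n * (k+1)) * ((j + 1 : ℕ):ℝ) ^ 1 * (A ^ k) ^ j := by rw [pow_one]

lemma card_piAntidiag_le {ι : Type*} [DecidableEq ι] (s : Finset ι) (j : ℕ) :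
    (piAntidiag s j).card ≤ (j + 1) ^ s.card := by
  have : (piAntidiag s j).card ≤ (s.pi fun _ => Finset.range (j+1)).card := by
    apply Finset.card_le_card_of_injOn (fun α => fun i _ => α i)
    · intro α hα
      rw [Finset.mem_coe, Finset.mem_pi]
      intro i hi
      rw [Finset.mem_range, Nat.lt_succ_iff]
      obtain ⟨h1, -⟩ := Finset.mem_piAntidiag.mp hα
      calc α i ≤ ∑ i ∈ s, α i := Finset.single_le_sum (fun _ _ => Nat.zero_le _) hi
        _ = j := h1
    · intro α hα β hβ h
      funext i
      by_cases hi : i ∈ s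
      · exact congrFun (congrFun h i) hi
      · obtain ⟨-, h2⟩ := Finset.mem_piAntidiag.mp hα
        obtain ⟨-, h3⟩ := Finset.mem_piAntidiag.mp hβ
        rcases Nat.eq_zero_or_pos (α i) with h0 | h0
        · rcases Nat.eq_zero_or_pos (β i) with h0' | h0'
          · rw [h0, h0']
          · exact absurd (h3 i (by omega)) hi
        · exact absurd (h2 i (by omega)) hi
  refine this.trans ?_
  rw [Finset.card_pi]
  simp [Finset.prod_const]

lemma norm_sum_le_max_card {ι : Type*} [DecidableEq ι] (s : Finset ι) (f : ι → K) (M : ℝ)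
    (hM : 0 ≤ M) (h : ∀ i ∈ s, ‖f i‖ ≤ M) :
    ‖∑ i ∈ s, f i‖ ≤ max ‖((s.card : ℕ) : K)‖ 1 * M := by
  set A := max ‖((s.card : ℕ) : K)‖ 1 with hA
  have hA1 : (1:ℝ) ≤ A := le_max_right _ _
  rcases s.eq_empty_or_nonempty with rfl | hs
  · simpa using by positivity
  have hcard1 : 1 ≤ s.card := Finset.Nonempty.card_pos hs
  rcases hM.eq_or_lt with hM0 | hM0
  · have : ∀ i ∈ s, f i = 0 := by
      intro i hi
      have h2 := h i hi
      rw [← hM0] at h2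
      exact norm_le_zero_iff.mp h2
    rw [Finset.sum_congr rfl this]
    simp
    positivity
  have hb : (0:ℝ) < A * M := by positivity
  refine le_of_pow_le_poly_mul_pow (c := 1) (d := s.card) hb one_pos ?_
  intro j hj
  rw [← norm_pow, Finset.sum_pow_eq_sum_piAntidiag]
  have hsum : ∑ α ∈ piAntidiag s j, Nat.multinomial s α = s.card ^ j := by
    have := Finset.sum_pow_eq_sum_piAntidiag (R := ℕ) s (fun _ => 1) j
    simpa using this.symm
  have hterm : ∀ α ∈ piAntidiag s j,
      ‖(Nat.multinomial s α : K) * ∏ i ∈ s, f i ^ α i‖ ≤ A ^ j * M ^ j := by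
    intro α hα
    rw [norm_mul]
    have hm1 : ‖((Nat.multinomial s α : ℕ) : K)‖ ≤ A ^ j := by
      rw [hA]
      apply norm_natCast_le_max_pow s.card hcard1 j
      rw [← hsum]
      exact Finset.single_le_sum (fun _ _ => Nat.zero_le _) hα
    have hm2 : ‖∏ i ∈ s, f i ^ α i‖ ≤ M ^ j := by
      rw [norm_prod]
      obtain ⟨h1, -⟩ := Finset.mem_piAntidiag.mp hα
      calc ∏ i ∈ s, ‖f i ^ α i‖ ≤ ∏ i ∈ s, M ^ α i := by
            apply Finset.prod_le_prod (fun _ _ => norm_nonneg _)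
            intro i hi
            rw [norm_pow]
            exact pow_le_pow_left₀ (norm_nonneg _) (h i hi) _
        _ = M ^ (∑ i ∈ s, α i) := by rw [Finset.prod_pow_eq_pow_sum]
        _ = M ^ j := by rw [h1]
    exact mul_le_mul hm1 hm2 (norm_nonneg _) (by positivity)
  calc ‖∑ α ∈ piAntidiag s j, (Nat.multinomial s α : K) * ∏ i ∈ s, f i ^ α i‖
      ≤ ∑ α ∈ piAntidiag s j, ‖(Nat.multinomial s α : K) * ∏ i ∈ s, f i ^ α i‖ :=
        norm_sum_le _ _
    _ ≤ ∑ _α ∈ piAntidiag s j, A ^ j * M ^ j := Finset.sum_le_sum hterm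
    _ = (piAntidiag s j).card * (A ^ j * M ^ j) := by rw [Finset.sum_const, nsmul_eq_mul]
    _ ≤ ((j + 1) ^ s.card : ℕ) * (A ^ j * M ^ j) := by
        apply mul_le_mul_of_nonneg_right _ (by positivity)
        exact_mod_cast card_piAntidiag_le s j
    _ = 1 * ((j + 1 : ℕ) : ℝ) ^ s.card * (A * M) ^ j := by
        push_cast
        ring

section PolyNorm

variable {σ : Type*}

lemma coeffNorm_nonneg (F : MvPolynomial σ K) : 0 ≤ coeffNorm F := NNReal.coe_nonneg _

lemma norm_coeff_le_coeffNorm (F : MvPolynomial σ K) (m : σ →₀ ℕ) :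
    ‖F.coeff m‖ ≤ coeffNorm F := by
  by_cases hm : m ∈ F.support
  · have : ‖F.coeff m‖₊ ≤ F.support.sup fun m => ‖F.coeff m‖₊ :=
      Finset.le_sup (f := fun m => ‖F.coeff m‖₊) hm
    exact_mod_cast this
  · rw [MvPolynomial.notMem_support_iff.mp hm]
    simpa using coeffNorm_nonneg F

lemma coeffNorm_le {F : MvPolynomial σ K} {R : ℝ} (hR : 0 ≤ R)
    (h : ∀ m, ‖F.coeff m‖ ≤ R) : coeffNorm F ≤ R := by
  have : F.support.sup (fun m => ‖F.coeff m‖₊) ≤ ⟨R, hR⟩ := by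
    apply Finset.sup_le
    intro m _
    have := h m
    apply NNReal.coe_le_coe.mp
    exact this
  exact_mod_cast this

lemma coeffNorm_pos {F : MvPolynomial σ K} (hF : F ≠ 0) : 0 < coeffNorm F := by
  obtain ⟨m, hm⟩ := MvPolynomial.ne_zero_iff.mp hF
  have h1 : 0 < ‖F.coeff m‖ := norm_pos_iff.mpr hm
  exact lt_of_lt_of_le h1 (norm_coeff_le_coeffNorm F m)

variable {n : ℕ}

lemma matNorm_nonneg (M : Matrix (Fin n) (Fin n) K) : 0 ≤ matNorm M := NNReal.coe_nonneg _

lemma norm_entry_le_matNorm (M : Matrix (Fin n) (Fin n) K) (i j : Fin n) :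
    ‖M i j‖ ≤ matNorm M := by
  have : ‖M i j‖₊ ≤ (Finset.univ ×ˢ Finset.univ).sup fun p : Fin n × Fin n => ‖M p.1 p.2‖₊ :=
    Finset.le_sup (f := fun p : Fin n × Fin n => ‖M p.1 p.2‖₊) (b := (i, j))
      (Finset.mem_product.mpr ⟨Finset.mem_univ i, Finset.mem_univ j⟩)
  exact_mod_cast this

lemma matNorm_pos {M : Matrix (Fin n) (Fin n) K} (hM : M ≠ 0) : 0 < matNorm M := by
  have : ∃ i j, M i j ≠ 0 := by
    by_contra hc
    push_neg at hc
    exact hM (by ext i j; simpa using hc i j)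
  obtain ⟨i, j, hij⟩ := this
  exact lt_of_lt_of_le (norm_pos_iff.mpr hij) (norm_entry_le_matNorm M i j)

end PolyNorm

variable {N : ℕ}

lemma prod_linear_coeff_bound (B : Matrix (Fin (N+1)) (Fin (N+1)) K) :
    ∀ (d : ℕ) (g : Fin (N+1) → ℕ), (∑ i, g i) = d → ∀ n : Fin (N+1) →₀ ℕ,
      ‖MvPolynomial.coeff n
          (∏ i, (∑ j, C (B i j) * X j : MvPolynomial (Fin (N+1)) K) ^ g i)‖ ≤
        (max ‖(((N+1 : ℕ)) : K)‖ 1 * matNorm B) ^ d := by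
  set L : Fin (N+1) → MvPolynomial (Fin (N+1)) K := fun i => ∑ j, C (B i j) * X j with hL
  set A : ℝ := max ‖(((N+1 : ℕ)) : K)‖ 1 with hA
  set β : ℝ := matNorm B with hβ
  have hA1 : (1:ℝ) ≤ A := le_max_right _ _
  have hβ0 : (0:ℝ) ≤ β := matNorm_nonneg B
  intro d
  induction d with
  | zero =>
    intro g hg n
    have hg0 : ∀ i, g i = 0 := by
      intro i
      have := Finset.sum_eq_zero_iff.mp hg
      exact this i (mem_univ i)
    have : (∏ i, L i ^ g i) = 1 := by
      apply Finset.prod_eq_one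
      intro i _
      rw [hg0 i, pow_zero]
    rw [this, pow_zero, MvPolynomial.coeff_one]
    split <;> simp
  | succ d ih =>
    intro g hg n
    have : ∃ i, g i ≠ 0 := by
      by_contra hc
      push_neg at hc
      rw [Finset.sum_eq_zero (fun i _ => hc i)] at hg
      omega
    obtain ⟨i, hi⟩ := this
    set g' : Fin (N+1) → ℕ := Function.update g i (g i - 1) with hg'
    have hsum' : (∑ j, g' j) = d := by
      rw [Finset.sum_update_of_mem (mem_univ i), Finset.sdiff_singleton_eq_erase]
      have := Finset.add_sum_erase Finset.univ g (mem_univ i)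
      omega
    set Q : MvPolynomial (Fin (N+1)) K := ∏ j, L j ^ g' j with hQ
    have hprod : (∏ j, L j ^ g j) = Q * L i := by
      rw [hQ]
      rw [← Finset.mul_prod_erase Finset.univ (fun j => L j ^ g j) (mem_univ i),
          ← Finset.mul_prod_erase Finset.univ (fun j => L j ^ g' j) (mem_univ i)]
      have herase : ∏ j ∈ Finset.univ.erase i, L j ^ g' j
          = ∏ j ∈ Finset.univ.erase i, L j ^ g j := by
        apply Finset.prod_congr rfl
        intro j hj
        rw [hg', Function.update_of_ne (Finset.ne_of_mem_erase hj)]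
      rw [herase, hg', Function.update_self]
      have : L i ^ g i = L i ^ (g i - 1) * L i := by
        conv_lhs => rw [show g i = (g i - 1) + 1 by omega]
        rw [pow_succ]
      rw [this]
      ring
    have hQL : Q * L i = ∑ j, C (B i j) * (Q * X j) := by
      rw [hL, Finset.mul_sum]
      apply Finset.sum_congr rfl
      intro j _
      ring
    rw [hprod, hQL, MvPolynomial.coeff_sum]
    have hstep : ∀ j : Fin (N+1),
        ‖MvPolynomial.coeff n (C (B i j) * (Q * X j))‖ ≤ β * (A * β) ^ d := by
      intro j
      rw [MvPolynomial.coeff_C_mul, norm_mul, MvPolynomial.coeff_mul_X']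
      have hB : ‖B i j‖ ≤ β := norm_entry_le_matNorm B i j
      have hcoeff : ‖(if j ∈ n.support then
          MvPolynomial.coeff (n - Finsupp.single j 1) Q else 0)‖ ≤ (A * β) ^ d := by
        split
        · exact ih g' hsum' _
        · simp only [norm_zero]
          positivity
      exact mul_le_mul hB hcoeff (norm_nonneg _) hβ0
    have := norm_sum_le_max_card Finset.univ
      (fun j => MvPolynomial.coeff n (C (B i j) * (Q * X j))) (β * (A * β) ^ d)
      (by positivity) (fun j _ => hstep j)
    rw [Finset.card_univ, Fintype.card_fin] at this
    refine this.trans ?_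
    rw [← hA, pow_succ]
    ring_nf
    exact le_refl _

lemma card_support_le {N δ : ℕ} {K : Type*} [NormedField K] (F : MvPolynomial (Fin (N+1)) K)
    (hdeg : ∀ m ∈ F.support, (∑ i, m i) = δ) :
    F.support.card ≤ 2 ^ (δ + N) := by
  classical
  have hmap : ∀ m ∈ F.support, Multiset.card (Finsupp.toMultiset m) = δ := by
    intro m hm
    rw [Finsupp.card_toMultiset, ← hdeg m hm]
    rw [Finsupp.sum_fintype] <;> simp
  have h1 : F.support.card ≤ (Finset.univ : Finset (Sym (Fin (N+1)) δ)).card := by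
    refine Finset.card_le_card_of_injOn
      (fun m : Fin (N+1) →₀ ℕ =>
        if h : Multiset.card (Finsupp.toMultiset m) = δ
        then (⟨Finsupp.toMultiset m, h⟩ : Sym (Fin (N+1)) δ)
        else Sym.replicate δ 0)
      (fun a _ => Finset.mem_univ _) ?_
    intro m hm m' hm' h
    dsimp only at h
    replace h := ((dif_pos (hmap m (Finset.mem_coe.mp hm))).symm.trans h).trans
      (dif_pos (hmap m' (Finset.mem_coe.mp hm')))
    have h2 : Finsupp.toMultiset m = Finsupp.toMultiset m' := congrArg Sym.toMultiset h
    have := congrArg Multiset.toFinsupp h2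
    rwa [Finsupp.toMultiset_toFinsupp, Finsupp.toMultiset_toFinsupp] at this
  rw [Finset.card_univ] at h1
  have h2 : Fintype.card (Sym (Fin (N+1)) δ) = (N + δ).choose δ := by
    rw [Sym.card_sym_eq_choose, Fintype.card_fin]
    congr 1
    omega
  have h3 : (N + δ).choose δ ≤ 2 ^ (N + δ) := by
    have h4 : (N + δ).choose δ ≤ ∑ m ∈ Finset.range (N + δ + 1), (N + δ).choose m :=
      Finset.single_le_sum (fun _ _ => Nat.zero_le _) (Finset.mem_range.mpr (by omega))
    rwa [Nat.sum_range_choose] at h4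
  calc F.support.card ≤ (N + δ).choose δ := h2 ▸ h1
    _ ≤ 2 ^ (N + δ) := h3
    _ = 2 ^ (δ + N) := by rw [Nat.add_comm]


lemma log_max_one (x : ℝ) (hx : 0 ≤ x) : Real.log (max x 1) = max (Real.log x) 0 := by
  rcases le_total x 1 with h | h
  · rw [max_eq_right h, Real.log_one, max_eq_right (Real.log_nonpos hx h)]
  · rw [max_eq_left h, max_eq_left (Real.log_nonneg h)]

end Stmt7Aux

open Stmt7Aux Finset

/-- for a homogeneous form `F` of degree `δ` in `N+1` variables over a
complete valued field `K` and `B ∈ GL_{N+1}(K)`,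
`log‖F(B·X)‖ ≤ log‖F‖ + δ·log‖B‖ + δ·log⁺|N+1| + δ·log⁺|2| + N·log⁺|2|`. -/
theorem stmt7 {K : Type*} [NormedField K] [CompleteSpace K] {N δ : ℕ}
    (F : MvPolynomial (Fin (N + 1)) K) (hF : F ≠ 0) (hhom : F.IsHomogeneous δ)
    (B : Matrix (Fin (N + 1)) (Fin (N + 1)) K) (hB : IsUnit B) :
    Real.log (coeffNorm
        (MvPolynomial.aeval (fun i => ∑ j, MvPolynomial.C (B i j) * MvPolynomial.X j) F)) ≤
      Real.log (coeffNorm F) + (δ : ℝ) * Real.log (matNorm B)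
        + (δ : ℝ) * max (Real.log ‖((N + 1 : ℕ) : K)‖) 0
        + (δ : ℝ) * max (Real.log ‖(2 : K)‖) 0
        + (N : ℝ) * max (Real.log ‖(2 : K)‖) 0 := by
  classical
  set L : Fin (N+1) → MvPolynomial (Fin (N+1)) K := fun i => ∑ j, C (B i j) * X j with hL
  set G : MvPolynomial (Fin (N+1)) K := MvPolynomial.aeval L F with hG
  set A1 : ℝ := max ‖(((N+1 : ℕ)) : K)‖ 1 with hA1
  set A2 : ℝ := max ‖(2 : K)‖ 1 with hA2
  set β : ℝ := matNorm B with hβ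
  have hA1ge : (1:ℝ) ≤ A1 := le_max_right _ _
  have hA2ge : (1:ℝ) ≤ A2 := le_max_right _ _
  have hdet := (Matrix.isUnit_iff_isUnit_det B).mp hB
  -- degrees of support monomials
  have hdeg : ∀ m ∈ F.support, (∑ i, m i) = δ := by
    intro m hm
    have h2 := hhom (MvPolynomial.mem_support_iff.mp hm)
    rw [← h2]
    change _ = (Finsupp.weight (fun _ => 1)) m
    rw [← Finsupp.degree_eq_weight_one, Finsupp.degree_apply,
      Finset.sum_subset (Finset.subset_univ m.support)]
    intro i _ hi
    exact Finsupp.notMem_support_iff.mp hi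
  -- support cardinality bound
  have hcard : F.support.card ≤ 2 ^ (δ + N) := card_support_le F hdeg
  -- decomposition of G
  have hGF : G = ∑ m ∈ F.support, C (MvPolynomial.coeff m F) * ∏ i, L i ^ m i := by
    conv_lhs => rw [hG, MvPolynomial.as_sum F]
    rw [map_sum]
    apply Finset.sum_congr rfl
    intro m hm
    rw [MvPolynomial.aeval_monomial, MvPolynomial.algebraMap_eq]
    congr 1
    rw [Finsupp.prod]
    exact Finset.prod_subset (Finset.subset_univ _)
      (fun i _ hi => by rw [Finsupp.notMem_support_iff.mp hi, pow_zero])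
  -- coefficient bound
  have hcoeff : ∀ n : Fin (N+1) →₀ ℕ,
      ‖MvPolynomial.coeff n G‖ ≤ A2 ^ (δ + N) * (coeffNorm F * (A1 * β) ^ δ) := by
    intro n
    rw [hGF, MvPolynomial.coeff_sum]
    have hM0 : (0:ℝ) ≤ coeffNorm F * (A1 * β) ^ δ := by
      have := coeffNorm_nonneg F
      have := matNorm_nonneg B
      positivity
    have hterm : ∀ m ∈ F.support,
        ‖MvPolynomial.coeff n (C (MvPolynomial.coeff m F) * ∏ i, L i ^ m i)‖ ≤
          coeffNorm F * (A1 * β) ^ δ := by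
      intro m hm
      rw [MvPolynomial.coeff_C_mul, norm_mul]
      exact mul_le_mul (norm_coeff_le_coeffNorm F m)
        (prod_linear_coeff_bound B δ (fun i => m i) (hdeg m hm) n) (norm_nonneg _)
        (coeffNorm_nonneg F)
    have hsum := norm_sum_le_max_card F.support
      (fun m => MvPolynomial.coeff n (C (MvPolynomial.coeff m F) * ∏ i, L i ^ m i))
      _ hM0 hterm
    refine hsum.trans (mul_le_mul_of_nonneg_right ?_ hM0)
    apply max_le
    · have := norm_natCast_le_max_pow (K := K) 2 (by norm_num) (δ + N) F.support.card hcard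
      rw [Nat.cast_ofNat] at this
      exact this.trans (le_refl _)
    · exact one_le_pow₀ hA2ge
  have hCGle : coeffNorm G ≤ A2 ^ (δ + N) * (coeffNorm F * (A1 * β) ^ δ) := by
    apply coeffNorm_le _ hcoeff
    have := coeffNorm_nonneg F
    have := matNorm_nonneg B
    positivity
  -- G ≠ 0
  have hGne : G ≠ 0 := by
    set L' : Fin (N+1) → MvPolynomial (Fin (N+1)) K := fun j => ∑ k, C (B⁻¹ j k) * X k with hL'
    have h2 : ∀ i, MvPolynomial.aeval L' (L i) = X i := by
      intro i
      rw [hL]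
      simp only [map_sum, map_mul, MvPolynomial.aeval_C, MvPolynomial.aeval_X,
        MvPolynomial.algebraMap_eq]
      calc ∑ j, C (B i j) * L' j = ∑ j, ∑ k, C (B i j * B⁻¹ j k) * X k := by
            apply Finset.sum_congr rfl
            intro j _
            rw [hL', Finset.mul_sum]
            apply Finset.sum_congr rfl
            intro k _
            rw [map_mul]
            ring
        _ = ∑ k, ∑ j, C (B i j * B⁻¹ j k) * X k := Finset.sum_comm
        _ = ∑ k, C ((B * B⁻¹) i k) * X k := by
            apply Finset.sum_congr rfl
            intro k _
            rw [← Finset.sum_mul, ← map_sum, Matrix.mul_apply]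
        _ = X i := by
            rw [Matrix.mul_nonsing_inv _ hdet]
            rw [Finset.sum_eq_single i]
            · simp [Matrix.one_apply]
            · intro k _ hk
              simp [Matrix.one_apply, (Ne.symm hk)]
            · intro h
              exact absurd (Finset.mem_univ i) h
    have hcomp : MvPolynomial.aeval L' G = F := by
      rw [hG]
      have h1 := MvPolynomial.comp_aeval (R := K) L (MvPolynomial.aeval L')
      have := AlgHom.congr_fun h1 F
      simp only [AlgHom.coe_comp, Function.comp_apply] at this
      rw [this]
      have : (fun i => MvPolynomial.aeval L' (L i)) = X := funext h2
      rw [this, MvPolynomial.aeval_X_left_apply]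
    intro h0
    rw [h0, map_zero] at hcomp
    exact hF hcomp.symm
  -- positivity facts
  have hCF : 0 < coeffNorm F := coeffNorm_pos hF
  have hCG : 0 < coeffNorm G := coeffNorm_pos hGne
  have hBne : B ≠ 0 := by
    rintro rfl
    rw [Matrix.det_zero] at hdet
    exact (by simpa using hdet : False)
  have hβpos : 0 < β := matNorm_pos hBne
  have hA1pos : (0:ℝ) < A1 := lt_of_lt_of_le one_pos hA1ge
  have hA2pos : (0:ℝ) < A2 := lt_of_lt_of_le one_pos hA2ge
  -- take logs
  have hre : A2 ^ (δ + N) * (coeffNorm F * (A1 * β) ^ δ)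
      = coeffNorm F * β ^ δ * A1 ^ δ * A2 ^ δ * A2 ^ N := by
    rw [mul_pow, pow_add]
    ring
  have hlog := Real.log_le_log hCG hCGle
  rw [hre] at hlog
  have hexp : Real.log (coeffNorm F * β ^ δ * A1 ^ δ * A2 ^ δ * A2 ^ N)
      = Real.log (coeffNorm F) + (δ:ℝ) * Real.log β + (δ:ℝ) * Real.log A1
        + (δ:ℝ) * Real.log A2 + (N:ℝ) * Real.log A2 := by
    rw [Real.log_mul (by positivity) (by positivity),
        Real.log_mul (by positivity) (by positivity),
        Real.log_mul (by positivity) (by positivity),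
        Real.log_mul (by positivity) (by positivity),
        Real.log_pow, Real.log_pow, Real.log_pow, Real.log_pow]
  rw [hexp] at hlog
  have e1 : Real.log A1 = max (Real.log ‖((N + 1 : ℕ) : K)‖) 0 := by
    rw [hA1, log_max_one _ (norm_nonneg _)]
  have e2 : Real.log A2 = max (Real.log ‖(2 : K)‖) 0 := by
    rw [hA2, log_max_one _ (norm_nonneg _)]
  rw [e1, e2] at hlog
  exact hlog
end

section
/- With Δ_f as above, if D is an irreducible effective divisor on ℙ^N not containing H which is preperiodic under f_* (i.e., f_*^{n+k} D and f_*^n D are supported on the same irreducible hypersurface for some n ≥ 0, k ≥ 1), then Δ_f(D) = 0. -/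
open MvPolynomial Filter

/-- Restriction of a form in `N+1` variables to the hyperplane `H = {X_{N+1} = 0}`. -/
noncomputable def resH {K : Type*} [Field K] {N : ℕ}
    (F : MvPolynomial (Fin (N + 1)) K) : MvPolynomial (Fin (N + 1)) K :=
  MvPolynomial.aeval (fun i => if i = Fin.last N then 0 else MvPolynomial.X i) F

/-- `λ(D) = log‖F‖ - log‖F|_H‖` for a defining form `F`. -/
noncomputable def lamDiv {K : Type*} [NormedField K] {N : ℕ}
    (F : MvPolynomial (Fin (N + 1)) K) : ℝ :=
  Real.log (coeffNorm F) - Real.log (coeffNorm (resH F))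

/-- The block matrix `L = [[A, b], [0, 1]]` associated to `f(X) = A·X^d + b`. -/
noncomputable def blockL {K : Type*} [Field K] {N : ℕ} (A : Matrix (Fin N) (Fin N) K)
    (b : Fin N → K) : Matrix (Fin (N + 1)) (Fin (N + 1)) K :=
  Matrix.of fun i j =>
    if hi : (i : ℕ) < N then
      (if hj : (j : ℕ) < N then A ⟨i, hi⟩ ⟨j, hj⟩ else b ⟨i, hi⟩)
    else (if (j : ℕ) < N then 0 else 1)

/-- The homogeneous forms `F_i = ∑_j L_{i,j} X_j^d` defining `f` on `ℙ^N`. -/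
noncomputable def fForms {K : Type*} [Field K] {N : ℕ} (A : Matrix (Fin N) (Fin N) K)
    (b : Fin N → K) (d : ℕ) : Fin (N + 1) → MvPolynomial (Fin (N + 1)) K :=
  fun i => ∑ j, MvPolynomial.C (blockL A b i j) * MvPolynomial.X j ^ d

/-- The twist `F_ζ(X₁,…,X_{N+1}) = F(ζ₁X₁,…,ζ_N X_N, X_{N+1})`. -/
noncomputable def twist {K : Type*} [Field K] {N : ℕ} (ζ : Fin N → K)
    (F : MvPolynomial (Fin (N + 1)) K) : MvPolynomial (Fin (N + 1)) K :=
  MvPolynomial.aeval (fun i : Fin (N + 1) =>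
    if h : (i : ℕ) < N then MvPolynomial.C (ζ ⟨i, h⟩) * MvPolynomial.X i
    else MvPolynomial.X i) F

/-- `G` defines the pushforward `f_*D` of the divisor defined by `F`. -/
def IsPush {K : Type*} [NormedField K] {N : ℕ} (A : Matrix (Fin N) (Fin N) K)
    (b : Fin N → K) (d : ℕ) (F G : MvPolynomial (Fin (N + 1)) K) : Prop :=
  ∃ c : K, c ≠ 0 ∧
    MvPolynomial.aeval (fForms A b d) G =
      c • ∏ ζ ∈ Fintype.piFinset (fun _ : Fin N => Polynomial.nthRootsFinset d (1 : K)),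
        twist ζ F

/-- A chain of successive pushforwards `c k = f_*^k D` starting at `D = F`. -/
def PushChain {K : Type*} [NormedField K] {N : ℕ} (A : Matrix (Fin N) (Fin N) K)
    (b : Fin N → K) (d : ℕ) (F : MvPolynomial (Fin (N + 1)) K)
    (c : ℕ → MvPolynomial (Fin (N + 1)) K) : Prop :=
  c 0 = F ∧ ∀ k, IsPush A b d (c k) (c (k + 1))


namespace Stmt19Aux

section CN
variable {K : Type*} [NormedField K] {σ : Type*}


theorem coeffNorm_nonneg (P : MvPolynomial σ K) : 0 ≤ coeffNorm P :=
  NNReal.coe_nonneg _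

theorem norm_coeff_le (P : MvPolynomial σ K) (m : σ →₀ ℕ) :
    ‖P.coeff m‖ ≤ coeffNorm P := by
  by_cases h : m ∈ P.support
  · exact_mod_cast (Finset.le_sup (f := fun m => ‖P.coeff m‖₊) h)
  · rw [MvPolynomial.notMem_support_iff.mp h]
    simpa using coeffNorm_nonneg P

theorem coeffNorm_pos {P : MvPolynomial σ K} (hP : P ≠ 0) : 0 < coeffNorm P := by
  obtain ⟨m, hm⟩ := (MvPolynomial.support_nonempty.mpr hP)
  have h1 : P.coeff m ≠ 0 := MvPolynomial.mem_support_iff.mp hm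
  have := norm_coeff_le P m
  have h2 : 0 < ‖P.coeff m‖ := norm_pos_iff.mpr h1
  linarith

theorem coeffNorm_ne_zero {P : MvPolynomial σ K} (hP : P ≠ 0) : coeffNorm P ≠ 0 :=
  ne_of_gt (coeffNorm_pos hP)

theorem coeffNorm_le_of {P : MvPolynomial σ K} {B : ℝ} (hB : 0 ≤ B)
    (h : ∀ m ∈ P.support, ‖P.coeff m‖ ≤ B) : coeffNorm P ≤ B := by
  have : (P.support.sup fun m => ‖P.coeff m‖₊) ≤ B.toNNReal := by
    refine Finset.sup_le fun m hm => ?_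
    rw [← NNReal.coe_le_coe, Real.coe_toNNReal _ hB, coe_nnnorm]
    exact h m hm
  calc coeffNorm P ≤ (B.toNNReal : ℝ) := NNReal.coe_le_coe.mpr this
    _ = B := Real.coe_toNNReal _ hB

theorem coeffNorm_C_mul {a : K} (ha : a ≠ 0) (P : MvPolynomial σ K) :
    coeffNorm (MvPolynomial.C a * P) = ‖a‖ * coeffNorm P := by
  have hsupp : (MvPolynomial.C a * P).support = P.support := by
    ext m
    simp [MvPolynomial.mem_support_iff, MvPolynomial.coeff_C_mul, ha]
  unfold coeffNorm
  rw [hsupp]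
  have : (P.support.sup fun m => ‖(MvPolynomial.C a * P).coeff m‖₊)
      = ‖a‖₊ * P.support.sup fun m => ‖P.coeff m‖₊ := by
    rw [NNReal.mul_finset_sup]
    refine Finset.sup_congr rfl fun m _ => ?_
    rw [MvPolynomial.coeff_C_mul, nnnorm_mul]
  rw [this, NNReal.coe_mul, coe_nnnorm]

theorem coeffNorm_mul_le (P Q : MvPolynomial σ K) :
    coeffNorm (P * Q) ≤ P.support.card * coeffNorm P * coeffNorm Q := by
  classical
  have hB : (0:ℝ) ≤ P.support.card * coeffNorm P * coeffNorm Q :=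
    mul_nonneg (mul_nonneg (Nat.cast_nonneg _) (coeffNorm_nonneg _)) (coeffNorm_nonneg _)
  refine coeffNorm_le_of hB fun m _ => ?_
  rw [MvPolynomial.coeff_mul]
  calc ‖∑ x ∈ Finset.HasAntidiagonal.antidiagonal m, P.coeff x.1 * Q.coeff x.2‖
      ≤ ∑ x ∈ Finset.HasAntidiagonal.antidiagonal m, ‖P.coeff x.1 * Q.coeff x.2‖ := norm_sum_le _ _
    _ ≤ ∑ x ∈ Finset.HasAntidiagonal.antidiagonal m,
        (if x.1 ∈ P.support then coeffNorm P * coeffNorm Q else 0) := by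
        refine Finset.sum_le_sum fun x _ => ?_
        by_cases hx : x.1 ∈ P.support
        · rw [if_pos hx, norm_mul]
          exact mul_le_mul (norm_coeff_le P x.1) (norm_coeff_le Q x.2) (norm_nonneg _)
            (coeffNorm_nonneg _)
        · rw [if_neg hx, MvPolynomial.notMem_support_iff.mp hx]
          simp
    _ = ((Finset.HasAntidiagonal.antidiagonal m).filter (fun x => x.1 ∈ P.support)).card *
        (coeffNorm P * coeffNorm Q) := by
        rw [Finset.sum_ite, Finset.sum_const, Finset.sum_const_zero, add_zero,
          nsmul_eq_mul]
    _ ≤ P.support.card * (coeffNorm P * coeffNorm Q) := by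
        refine mul_le_mul_of_nonneg_right ?_
          (mul_nonneg (coeffNorm_nonneg _) (coeffNorm_nonneg _))
        have : ((Finset.HasAntidiagonal.antidiagonal m).filter (fun x => x.1 ∈ P.support)).card
            ≤ P.support.card := by
          refine Finset.card_le_card_of_injOn (fun x => x.1) ?_ ?_
          · intro x hx
            exact (Finset.mem_filter.mp hx).2
          · intro x hx y hy hxy
            rw [Finset.mem_coe] at hx hy
            have hx' := Finset.HasAntidiagonal.mem_antidiagonal.mp (Finset.mem_filter.mp hx).1
            have hy' := Finset.HasAntidiagonal.mem_antidiagonal.mp (Finset.mem_filter.mp hy).1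
            have hxy1 : x.1 = y.1 := hxy
            have : x.2 = y.2 := by
              have := hx'.trans hy'.symm
              rwa [hxy1, add_right_inj] at this
            exact Prod.ext hxy1 this
        exact_mod_cast this
    _ = P.support.card * coeffNorm P * coeffNorm Q := by ring

theorem coeffNorm_pow_le {P : MvPolynomial σ K} (hP : P ≠ 0) :
    ∀ M : ℕ, 1 ≤ M → coeffNorm (P ^ M) ≤ (P.support.card * coeffNorm P) ^ M := by
  have hcard : (1:ℝ) ≤ P.support.card := by
    have := Finset.card_pos.mpr (MvPolynomial.support_nonempty.mpr hP)
    exact_mod_cast this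
  intro M hM
  induction M with
  | zero => omega
  | succ M ih =>
    rcases Nat.eq_or_lt_of_le hM with h1 | h1
    · rw [← h1, pow_one, pow_one]
      exact le_mul_of_one_le_left (coeffNorm_nonneg _) hcard
    · have hM' : 1 ≤ M := by omega
      have := ih hM'
      calc coeffNorm (P ^ (M+1)) = coeffNorm (P * P ^ M) := by rw [pow_succ, mul_comm]
        _ ≤ P.support.card * coeffNorm P * coeffNorm (P ^ M) := coeffNorm_mul_le _ _
        _ ≤ P.support.card * coeffNorm P * (P.support.card * coeffNorm P) ^ M := by
            refine mul_le_mul_of_nonneg_left this ?_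
            exact mul_nonneg (by positivity) (coeffNorm_nonneg _)
        _ = (P.support.card * coeffNorm P) ^ (M+1) := by rw [pow_succ]; ring

theorem eval_norm_le [Fintype σ] (x : σ → K) (P : MvPolynomial σ K) {BB : ℝ}
    (hBB : 1 ≤ BB) (hx : ∀ i, ‖x i‖ ≤ BB) :
    ‖MvPolynomial.eval x P‖ ≤ P.support.card * coeffNorm P * BB ^ P.totalDegree := by
  rw [MvPolynomial.eval_eq]
  calc ‖∑ m ∈ P.support, P.coeff m * ∏ i ∈ m.support, x i ^ m i‖
      ≤ ∑ m ∈ P.support, ‖P.coeff m * ∏ i ∈ m.support, x i ^ m i‖ := norm_sum_le _ _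
    _ ≤ ∑ m ∈ P.support, coeffNorm P * BB ^ P.totalDegree := by
        refine Finset.sum_le_sum fun m hm => ?_
        rw [norm_mul]
        refine mul_le_mul (norm_coeff_le P m) ?_ (norm_nonneg _) (coeffNorm_nonneg _)
        calc ‖∏ i ∈ m.support, x i ^ m i‖ = ∏ i ∈ m.support, ‖x i‖ ^ m i := by
              rw [norm_prod]; exact Finset.prod_congr rfl fun i _ => norm_pow _ _
          _ ≤ ∏ i ∈ m.support, BB ^ m i := by
              refine Finset.prod_le_prod (fun i _ => by positivity) fun i _ => ?_
              exact pow_le_pow_left₀ (norm_nonneg _) (hx i) _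
          _ = BB ^ (∑ i ∈ m.support, m i) := Finset.prod_pow_eq_pow_sum _ _ _
          _ ≤ BB ^ P.totalDegree := by
              refine pow_le_pow_right₀ hBB ?_
              exact MvPolynomial.le_totalDegree hm
    _ = P.support.card * coeffNorm P * BB ^ P.totalDegree := by
        rw [Finset.sum_const, nsmul_eq_mul]; ring

theorem support_card_le [Fintype σ] (P : MvPolynomial σ K) :
    P.support.card ≤ (P.totalDegree + 1) ^ (Fintype.card σ) := by
  classical
  have hle : ∀ m ∈ P.support, ∀ i, m i ≤ P.totalDegree := by
    intro m hm i
    refine le_trans ?_ (MvPolynomial.le_totalDegree hm)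
    by_cases h : m i = 0
    · simp [h]
    · exact Finset.single_le_sum (f := fun j => m j) (fun _ _ => Nat.zero_le _)
        (Finsupp.mem_support_iff.mpr h)
  have : P.support.card ≤ (Finset.univ : Finset (σ → Fin (P.totalDegree + 1))).card := by
    refine Finset.card_le_card_of_injOn
      (fun m i => (⟨min (m i) P.totalDegree, by omega⟩ : Fin (P.totalDegree + 1)))
      (fun _ _ => Finset.mem_univ _) ?_
    intro m hm m' hm' h
    rw [Finset.mem_coe] at hm hm'
    ext i
    have := congrFun h i
    simp only [Fin.mk.injEq] at this
    have h1 := hle m hm i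
    have h2 := hle m' hm' i
    omega
  calc P.support.card ≤ _ := this
    _ = (P.totalDegree + 1) ^ (Fintype.card σ) := by
        rw [Finset.card_univ, Fintype.card_fun]
        simp


end CN


variable {K : Type*} [Field K]

/-- Units of a multivariate polynomial ring over a field are nonzero constants. -/
theorem isUnit_eq_C : ∀ {M : ℕ} {u : MvPolynomial (Fin M) K}, IsUnit u →
    ∃ a : K, a ≠ 0 ∧ u = MvPolynomial.C a := by
  intro M
  induction M with
  | zero =>
    intro u hu
    obtain ⟨x, hx⟩ : ∃ x, u = MvPolynomial.C x := ⟨_, MvPolynomial.eq_C_of_isEmpty u⟩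
    refine ⟨x, fun h0 => ?_, hx⟩
    rw [hx, h0, map_zero] at hu
    exact hu.ne_zero rfl
  | succ M ih =>
    intro u hu
    have hE : IsUnit (MvPolynomial.finSuccEquiv K M u) := hu.map _
    obtain ⟨r, hr, hCr⟩ := Polynomial.isUnit_iff.mp hE
    obtain ⟨a, ha, rfl⟩ := ih hr
    refine ⟨a, ha, ?_⟩
    have h1 : (MvPolynomial.finSuccEquiv K M) (MvPolynomial.C a)
        = Polynomial.C (MvPolynomial.C a) := by
      rw [← MvPolynomial.algebraMap_eq, AlgEquiv.commutes, Polynomial.algebraMap_apply,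
        MvPolynomial.algebraMap_eq]
    exact ((MvPolynomial.finSuccEquiv K M).injective (h1.trans hCr)).symm

variable {N : ℕ}

theorem aeval_aeval {σ : Type*} (f g : σ → MvPolynomial σ K) (P : MvPolynomial σ K) :
    MvPolynomial.aeval f (MvPolynomial.aeval g P)
      = MvPolynomial.aeval (fun i => MvPolynomial.aeval f (g i)) P := by
  induction P using MvPolynomial.induction_on with
  | C a => simp
  | add p q hp hq => rw [map_add, map_add, map_add, hp, hq]
  | mul_X p i hp => rw [map_mul, map_mul, map_mul, hp, MvPolynomial.aeval_X, MvPolynomial.aeval_X]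

theorem eval_aeval {σ : Type*} (x : σ → K) (f : σ → MvPolynomial σ K) (P : MvPolynomial σ K) :
    MvPolynomial.eval x (MvPolynomial.aeval f P)
      = MvPolynomial.eval (fun i => MvPolynomial.eval x (f i)) P := by
  induction P using MvPolynomial.induction_on with
  | C a => simp
  | add p q hp hq => rw [map_add, map_add, map_add, hp, hq]
  | mul_X p i hp =>
      rw [map_mul, map_mul, map_mul, hp, MvPolynomial.aeval_X, MvPolynomial.eval_X]

theorem eval_fForms (A : Matrix (Fin N) (Fin N) K) (b : Fin N → K) (d : ℕ)
    (x : Fin (N+1) → K) (i : Fin (N+1)) :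
    MvPolynomial.eval x (fForms A b d i) = ∑ j, blockL A b i j * x j ^ d := by
  simp [fForms]

theorem fForms_surj (A : Matrix (Fin N) (Fin N) K) (hdet : A.det = 1) (b : Fin N → K)
    {d : ℕ} (hd0 : 0 < d) [IsAlgClosed K] (z : Fin (N+1) → K) :
    ∃ x : Fin (N+1) → K, ∀ i, MvPolynomial.eval x (fForms A b d i) = z i := by
  have hAdet : IsUnit A.det := by rw [hdet]; exact isUnit_one
  set zl := z (Fin.last N) with hzl
  set z' : Fin N → K := fun t => z t.castSucc - zl * b t with hz'
  set v : Fin N → K := A⁻¹.mulVec z' with hv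
  set u : Fin (N+1) → K := fun j => if hj : (j : ℕ) < N then v ⟨j, hj⟩ else zl with hu
  have hex : ∀ j, ∃ y : K, y ^ d = u j := fun j => IsAlgClosed.exists_pow_nat_eq (u j) hd0
  choose y hy using hex
  refine ⟨y, fun i => ?_⟩
  rw [eval_fForms]
  have hsum : ∑ j, blockL A b i j * y j ^ d = ∑ j, blockL A b i j * u j := by
    refine Finset.sum_congr rfl fun j _ => by rw [hy j]
  rw [hsum, Fin.sum_univ_castSucc]
  have hucs : ∀ j : Fin N, u j.castSucc = v j := by
    intro j
    have hcs : ((j.castSucc : Fin (N+1)) : ℕ) < N := by simpa using j.isLt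
    rw [hu]
    simp only [dif_pos hcs]
    first
    | rfl
    | (congr 1; exact Fin.ext (by simp))
  have hul : u (Fin.last N) = zl := by
    rw [hu]
    simp
  have hAv : A.mulVec v = z' := by
    rw [hv, Matrix.mulVec_mulVec, Matrix.mul_nonsing_inv _ hAdet, Matrix.one_mulVec]
  by_cases hi : (i : ℕ) < N
  · have hbcs : ∀ j : Fin N, blockL A b i j.castSucc = A ⟨i, hi⟩ j := by
      intro j
      have hcs : ((j.castSucc : Fin (N+1)) : ℕ) < N := by simpa using j.isLt
      simp only [blockL, Matrix.of_apply, dif_pos hi, dif_pos hcs]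
      first
      | rfl
      | (congr 1 <;> first | rfl | exact Fin.ext (by simp))
    have hbl : blockL A b i (Fin.last N) = b ⟨i, hi⟩ := by
      simp only [blockL, Matrix.of_apply, dif_pos hi, Fin.val_last]
      rw [dif_neg (lt_irrefl N)]
    have hmv : ∑ j : Fin N, A ⟨i, hi⟩ j * v j = z' ⟨i, hi⟩ := by
      have := congrFun hAv ⟨i, hi⟩
      rw [← this]
      simp [Matrix.mulVec, dotProduct]
    have hzi : z (Fin.castSucc ⟨i, hi⟩) = z i :=
      congrArg z (Fin.ext (by simp))
    calc ∑ j : Fin N, blockL A b i j.castSucc * u j.castSucc + blockL A b i (Fin.last N) * u (Fin.last N)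
        = ∑ j : Fin N, A ⟨i, hi⟩ j * v j + b ⟨i, hi⟩ * zl := by
          rw [hbl, hul]
          congr 1
          exact Finset.sum_congr rfl fun j _ => by rw [hbcs j, hucs j]
      _ = z' ⟨i, hi⟩ + b ⟨i, hi⟩ * zl := by rw [hmv]
      _ = z i := by rw [hz']; simp only []; rw [hzi]; ring
  · have hilast : i = Fin.last N := by
      have := i.isLt
      exact Fin.ext (by simp only [Fin.val_last]; omega)
    subst hilast
    have hb0 : ∀ j : Fin N, blockL A b (Fin.last N) j.castSucc = 0 := by
      intro j
      have hcs : ((j.castSucc : Fin (N+1)) : ℕ) < N := by simpa using j.isLt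
      simp only [blockL, Matrix.of_apply, Fin.val_last]
      rw [dif_neg (lt_irrefl N), if_pos hcs]
    have hb1 : blockL A b (Fin.last N) (Fin.last N) = 1 := by
      simp only [blockL, Matrix.of_apply, Fin.val_last]
      rw [dif_neg (lt_irrefl N), if_neg (lt_irrefl N)]
    rw [hb1, hul]
    simp [hb0]
    exact hzl

theorem aeval_fForms_injective (A : Matrix (Fin N) (Fin N) K) (hdet : A.det = 1)
    (b : Fin N → K) {d : ℕ} (hd0 : 0 < d) [IsAlgClosed K] :
    Function.Injective (fun P : MvPolynomial (Fin (N+1)) K =>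
      MvPolynomial.aeval (fForms A b d) P) := by
  intro P Q h
  apply MvPolynomial.funext
  intro z
  obtain ⟨x, hx⟩ := fForms_surj A hdet b hd0 z
  have hfun : (fun i => MvPolynomial.eval x (fForms A b d i)) = z := funext hx
  have h1 := congrArg (MvPolynomial.eval x) h
  rw [eval_aeval, eval_aeval, hfun] at h1
  exact h1

theorem fForms_isHomogeneous (A : Matrix (Fin N) (Fin N) K) (b : Fin N → K) (d : ℕ)
    (i : Fin (N+1)) : (fForms A b d i).IsHomogeneous d := by
  rw [← MvPolynomial.mem_homogeneousSubmodule]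
  refine Submodule.sum_mem _ fun j _ => ?_
  rw [MvPolynomial.mem_homogeneousSubmodule]
  exact MvPolynomial.isHomogeneous_C_mul_X_pow _ _ _

theorem twist_isHomogeneous (ζ : Fin N → K) (P : MvPolynomial (Fin (N+1)) K) {m : ℕ}
    (hP : P.IsHomogeneous m) : (twist ζ P).IsHomogeneous m := by
  have := hP.aeval (fun i : Fin (N + 1) =>
    if h : (i : ℕ) < N then MvPolynomial.C (ζ ⟨i, h⟩) * MvPolynomial.X i
    else MvPolynomial.X i) (n := 1) ?_
  · simpa [twist] using this
  · intro i
    by_cases h : (i : ℕ) < N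
    · rw [dif_pos h]
      exact (MvPolynomial.isHomogeneous_X _ _).C_mul _
    · rw [dif_neg h]
      exact MvPolynomial.isHomogeneous_X _ _

theorem twist_injective {ζ : Fin N → K} (hζ : ∀ i, ζ i ≠ 0) :
    Function.Injective (twist ζ : MvPolynomial (Fin (N+1)) K → MvPolynomial (Fin (N+1)) K) := by
  set tf := fun i : Fin (N + 1) =>
    if h : (i : ℕ) < N then MvPolynomial.C (ζ ⟨i, h⟩) * MvPolynomial.X i
    else MvPolynomial.X i with htf
  set tg := fun i : Fin (N + 1) =>
    if h : (i : ℕ) < N then MvPolynomial.C (ζ ⟨i, h⟩)⁻¹ * MvPolynomial.X i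
    else MvPolynomial.X i with htg
  have hleft : ∀ P : MvPolynomial (Fin (N+1)) K,
      MvPolynomial.aeval tg (twist ζ P) = P := by
    intro P
    show MvPolynomial.aeval tg (MvPolynomial.aeval tf P) = P
    rw [aeval_aeval]
    have : (fun i => MvPolynomial.aeval tg (tf i)) = MvPolynomial.X := by
      funext i
      by_cases h : (i : ℕ) < N
      · rw [htf]
        simp only [dif_pos h, map_mul, MvPolynomial.aeval_C, MvPolynomial.aeval_X]
        rw [htg]
        simp only [dif_pos h]
        rw [← mul_assoc, ← MvPolynomial.algebraMap_eq, ← map_mul]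
        rw [mul_inv_cancel₀ (hζ _)]
        simp
      · rw [htf]
        simp only [dif_neg h, MvPolynomial.aeval_X]
        rw [htg]
        simp only [dif_neg h]
    rw [this]
    simp
  intro P Q h
  have := congrArg (MvPolynomial.aeval tg) h
  rwa [hleft, hleft] at this

theorem twist_C_mul (ζ : Fin N → K) (a : K) (P : MvPolynomial (Fin (N+1)) K) :
    twist ζ (MvPolynomial.C a * P) = MvPolynomial.C a * twist ζ P := by
  unfold twist
  rw [map_mul, MvPolynomial.aeval_C, MvPolynomial.algebraMap_eq]

theorem twist_pow (ζ : Fin N → K) (P : MvPolynomial (Fin (N+1)) K) (M : ℕ) :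
    twist ζ (P ^ M) = (twist ζ P) ^ M := by
  unfold twist; rw [map_pow]

theorem resH_C_mul (a : K) (P : MvPolynomial (Fin (N+1)) K) :
    resH (MvPolynomial.C a * P) = MvPolynomial.C a * resH P := by
  unfold resH
  rw [map_mul, MvPolynomial.aeval_C, MvPolynomial.algebraMap_eq]

theorem resH_pow (P : MvPolynomial (Fin (N+1)) K) (M : ℕ) :
    resH (P ^ M) = (resH P) ^ M := by
  unfold resH; rw [map_pow]

theorem resH_C (a : K) : resH (MvPolynomial.C a : MvPolynomial (Fin (N+1)) K)
    = MvPolynomial.C a := by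
  unfold resH
  rw [MvPolynomial.aeval_C, MvPolynomial.algebraMap_eq]

theorem fForms_last (A : Matrix (Fin N) (Fin N) K) (b : Fin N → K) (d : ℕ) :
    fForms A b d (Fin.last N) = MvPolynomial.X (Fin.last N) ^ d := by
  unfold fForms
  rw [Finset.sum_eq_single (Fin.last N)]
  · simp only [blockL, Matrix.of_apply, Fin.val_last]
    rw [dif_neg (lt_irrefl N), if_neg (lt_irrefl N)]
    simp
  · intro j _ hj
    have hjN : (j : ℕ) < N := by
      have h1 := j.isLt
      have h2 : (j : ℕ) ≠ N := fun h => hj (Fin.ext (by simp [h]))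
      omega
    simp only [blockL, Matrix.of_apply, Fin.val_last]
    rw [dif_neg (lt_irrefl N), if_pos hjN]
    simp
  · intro h
    exact absurd (Finset.mem_univ _) h

theorem resH_twist (ζ : Fin N → K) (P : MvPolynomial (Fin (N+1)) K) :
    resH (twist ζ P) = twist ζ (resH P) := by
  unfold resH twist
  rw [aeval_aeval, aeval_aeval]
  refine congrArg (fun f => MvPolynomial.aeval f P) (funext fun i => ?_)
  by_cases h : (i : ℕ) < N
  · have hne : i ≠ Fin.last N := by
      intro he
      rw [he, Fin.val_last] at h
      exact absurd h (lt_irrefl N)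
    rw [dif_pos h, if_neg hne, map_mul, MvPolynomial.aeval_C, MvPolynomial.aeval_X,
      if_neg hne, MvPolynomial.aeval_X, dif_pos h, MvPolynomial.algebraMap_eq]
  · have he : i = Fin.last N := by
      have := i.isLt
      exact Fin.ext (by simp only [Fin.val_last]; omega)
    rw [dif_neg h, if_pos he, MvPolynomial.aeval_X, if_pos he, map_zero]

theorem resH_aeval_fForms (A : Matrix (Fin N) (Fin N) K) (b : Fin N → K) {d : ℕ}
    (hd0 : 0 < d) (G : MvPolynomial (Fin (N+1)) K) :
    resH (MvPolynomial.aeval (fForms A b d) G)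
      = MvPolynomial.aeval (fun i => resH (fForms A b d i)) (resH G) := by
  unfold resH
  rw [aeval_aeval, aeval_aeval]
  refine congrArg (fun f => MvPolynomial.aeval f G) (funext fun i => ?_)
  by_cases he : i = Fin.last N
  · rw [if_pos he, map_zero, he, fForms_last, map_pow, MvPolynomial.aeval_X, if_pos rfl,
      zero_pow (by omega : d ≠ 0)]
  · rw [if_neg he, MvPolynomial.aeval_X]


section NF
variable {K : Type*} [NormedField K] {N : ℕ}

theorem twist_zero (ζ : Fin N → K) : twist ζ (0 : MvPolynomial (Fin (N+1)) K) = 0 := by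
  unfold twist; exact map_zero _

theorem resH_prod {ι : Type*} (s : Finset ι) (f : ι → MvPolynomial (Fin (N+1)) K) :
    resH (∏ i ∈ s, f i) = ∏ i ∈ s, resH (f i) := by
  unfold resH; exact map_prod _ _ _

theorem resH_zero : resH (0 : MvPolynomial (Fin (N+1)) K) = 0 := by
  unfold resH; exact map_zero _

/-- If the image of `G` under the pushforward substitution is homogeneous, then `G` is
homogeneous, of degree `E / d`. -/
theorem homog_of_aeval_homog (A : Matrix (Fin N) (Fin N) K) (hdet : A.det = 1)
    (b : Fin N → K) {d : ℕ} (hd0 : 0 < d) [IsAlgClosed K]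
    {G : MvPolynomial (Fin (N+1)) K} (hG : G ≠ 0) {E : ℕ}
    (hE : (MvPolynomial.aeval (fForms A b d) G).IsHomogeneous E) :
    G.IsHomogeneous G.totalDegree ∧ d * G.totalDegree = E := by
  classical
  set Φ : MvPolynomial (Fin (N+1)) K →ₐ[K] MvPolynomial (Fin (N+1)) K :=
    MvPolynomial.aeval (fForms A b d) with hΦ
  have hinj : Function.Injective (⇑Φ) := aeval_fForms_injective A hdet b hd0
  set D := G.totalDegree with hD
  have hcomp : ∀ i : ℕ, (Φ (MvPolynomial.homogeneousComponent i G)).IsHomogeneous (d * i) :=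
    fun i => (MvPolynomial.homogeneousComponent_isHomogeneous i G).aeval _
      (fForms_isHomogeneous A b d)
  have hsum : ∑ i ∈ Finset.range (D+1), Φ (MvPolynomial.homogeneousComponent i G) = Φ G := by
    rw [← map_sum, MvPolynomial.sum_homogeneousComponent]
  have hvanish : ∀ i : ℕ, d * i ≠ E → MvPolynomial.homogeneousComponent i G = 0 := by
    intro i hi
    by_cases hiD : i ≤ D
    · have h1 : MvPolynomial.homogeneousComponent (d*i) (Φ G) = 0 := by
        rw [MvPolynomial.homogeneousComponent_of_mem
          ((MvPolynomial.mem_homogeneousSubmodule _ _).mpr hE), if_neg hi]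
      have h2 : MvPolynomial.homogeneousComponent (d*i) (Φ G)
          = Φ (MvPolynomial.homogeneousComponent i G) := by
        rw [← hsum, map_sum]
        have hterm : ∀ j ∈ Finset.range (D+1),
            MvPolynomial.homogeneousComponent (d*i) (Φ (MvPolynomial.homogeneousComponent j G))
            = if j = i then Φ (MvPolynomial.homogeneousComponent j G) else 0 := by
          intro j _
          rw [MvPolynomial.homogeneousComponent_of_mem
            ((MvPolynomial.mem_homogeneousSubmodule _ _).mpr (hcomp j))]
          by_cases hji : j = i
          · subst hji; simp
          · rw [if_neg (fun h => hji (Nat.eq_of_mul_eq_mul_left hd0 h).symm), if_neg hji]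
        rw [Finset.sum_congr rfl hterm, Finset.sum_ite_eq' (Finset.range (D+1)) i
          (fun j => Φ (MvPolynomial.homogeneousComponent j G)),
          if_pos (Finset.mem_range.mpr (by omega))]
      have := h2.symm.trans h1
      rw [← map_zero Φ] at this
      exact hinj this
    · exact MvPolynomial.homogeneousComponent_eq_zero i G (by omega : D < i)
  have hex : ∃ i, i ∈ Finset.range (D+1) ∧ MvPolynomial.homogeneousComponent i G ≠ 0 := by
    by_contra h
    push_neg at h
    apply hG
    rw [← MvPolynomial.sum_homogeneousComponent G]
    exact Finset.sum_eq_zero h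
  obtain ⟨i, hiR, hine⟩ := hex
  have hdi : d * i = E := by
    by_contra h
    exact hine (hvanish i h)
  have hGi : G = MvPolynomial.homogeneousComponent i G := by
    conv_lhs => rw [← MvPolynomial.sum_homogeneousComponent G]
    rw [Finset.sum_eq_single_of_mem i hiR]
    intro j _ hji
    refine hvanish j fun h => hji ?_
    rw [← hdi] at h
    exact Nat.eq_of_mul_eq_mul_left hd0 h
  have hGhom : G.IsHomogeneous i := by
    rw [hGi]
    exact MvPolynomial.homogeneousComponent_isHomogeneous i G
  have hdeg : G.totalDegree = i := hGhom.totalDegree hG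
  constructor
  · rw [hD, hdeg]; exact hGhom
  · rw [hD, hdeg]; exact hdi

theorem zeta_ne_zero {d : ℕ} (hd0 : 0 < d) {ζ : Fin N → K}
    (hζ : ζ ∈ Fintype.piFinset (fun _ : Fin N => Polynomial.nthRootsFinset d (1 : K))) :
    ∀ i, ζ i ≠ 0 := by
  intro i
  have := Fintype.mem_piFinset.mp hζ i
  exact Polynomial.ne_zero_of_mem_nthRootsFinset one_ne_zero this

/-- One pushforward step: preservation of nonvanishing, `resH`-nonvanishing,
homogeneity, and the degree relation. -/
theorem push_step (A : Matrix (Fin N) (Fin N) K) (hdet : A.det = 1)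
    (b : Fin N → K) {d : ℕ} (hd0 : 0 < d) [IsAlgClosed K]
    {P Q : MvPolynomial (Fin (N+1)) K} (hpush : IsPush A b d P Q)
    (hP : P ≠ 0) (hPr : resH P ≠ 0) (hPh : P.IsHomogeneous P.totalDegree) :
    Q ≠ 0 ∧ resH Q ≠ 0 ∧ Q.IsHomogeneous Q.totalDegree ∧
      d * Q.totalDegree =
        (Fintype.piFinset (fun _ : Fin N => Polynomial.nthRootsFinset d (1 : K))).card
          * P.totalDegree := by
  obtain ⟨γ, hγ, hpushEq⟩ := hpush
  rw [MvPolynomial.smul_eq_C_mul] at hpushEq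
  set S := Fintype.piFinset (fun _ : Fin N => Polynomial.nthRootsFinset d (1 : K)) with hS
  have hprod_ne : (∏ ζ ∈ S, twist ζ P) ≠ 0 := by
    rw [Finset.prod_ne_zero_iff]
    intro ζ hζ h0
    exact hP (twist_injective (zeta_ne_zero hd0 hζ) (h0.trans (twist_zero ζ).symm))
  have hRHS_ne : MvPolynomial.C γ * (∏ ζ ∈ S, twist ζ P) ≠ 0 :=
    mul_ne_zero (fun h => hγ (by simpa using (MvPolynomial.C_eq_zero.mp h))) hprod_ne
  have hQ : Q ≠ 0 := by
    intro h0
    rw [h0, map_zero] at hpushEq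
    exact hRHS_ne hpushEq.symm
  have hQr : resH Q ≠ 0 := by
    intro h0
    have h1 : resH (MvPolynomial.aeval (fForms A b d) Q) = 0 := by
      rw [resH_aeval_fForms A b hd0, h0, map_zero]
    rw [hpushEq] at h1
    rw [resH_C_mul, resH_prod] at h1
    have h2 : (∏ ζ ∈ S, resH (twist ζ P)) ≠ 0 := by
      rw [Finset.prod_ne_zero_iff]
      intro ζ hζ h00
      rw [resH_twist] at h00
      exact hPr (twist_injective (zeta_ne_zero hd0 hζ) (h00.trans (twist_zero ζ).symm))
    exact (mul_ne_zero (fun h => hγ (by simpa using (MvPolynomial.C_eq_zero.mp h))) h2) h1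
  have hhomRHS : (MvPolynomial.C γ * ∏ ζ ∈ S, twist ζ P).IsHomogeneous
      (S.card * P.totalDegree) := by
    have hprodhom : (∏ ζ ∈ S, twist ζ P).IsHomogeneous (∑ _ζ ∈ S, P.totalDegree) :=
      MvPolynomial.IsHomogeneous.prod S _ _ (fun ζ _ => twist_isHomogeneous ζ P hPh)
    rw [Finset.sum_const, smul_eq_mul] at hprodhom
    exact hprodhom.C_mul γ
  have hE : (MvPolynomial.aeval (fForms A b d) Q).IsHomogeneous (S.card * P.totalDegree) := by
    rw [hpushEq]; exact hhomRHS
  obtain ⟨hQh, hQd⟩ := homog_of_aeval_homog A hdet b hd0 hQ hE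
  exact ⟨hQ, hQr, hQh, hQd⟩


theorem keybound {K : Type*} [NormedField K] {N : ℕ} (x : Fin (N+1) → K) {BB : ℝ}
    (hBB1 : 1 ≤ BB) (hBBx : ∀ i, ‖x i‖ ≤ BB) (P : MvPolynomial (Fin (N+1)) K)
    (hP : P ≠ 0) (hxP : MvPolynomial.eval x P ≠ 0) :
    ∃ CP : ℝ, ∀ M : ℕ, 1 ≤ M → |Real.log (coeffNorm (P ^ M))| ≤ M * CP := by
  set DP := P.totalDegree with hDP
  set UP := Real.log (P.support.card * coeffNorm P) with hUP
  set LP := Real.log ‖MvPolynomial.eval x P‖ - DP * Real.log BB - (N+1) * (DP + 1) with hLP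
  refine ⟨|UP| + |LP|, fun M hM => ?_⟩
  have hM0 : (1:ℝ) ≤ (M:ℝ) := by exact_mod_cast hM
  have hPM : P ^ M ≠ 0 := pow_ne_zero _ hP
  have hcpos : (0:ℝ) < coeffNorm (P ^ M) := coeffNorm_pos hPM
  have hupper : Real.log (coeffNorm (P ^ M)) ≤ M * UP := by
    have h1 := coeffNorm_pow_le hP M hM
    have h3 := Real.log_le_log hcpos h1
    rwa [Real.log_pow] at h3
  have hlower : (M:ℝ) * LP ≤ Real.log (coeffNorm (P ^ M)) := by
    have h1 : ‖MvPolynomial.eval x P‖ ^ M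
        ≤ (P^M).support.card * coeffNorm (P^M) * BB ^ ((P^M).totalDegree) := by
      rw [← norm_pow, ← map_pow]
      exact eval_norm_le x _ hBB1 hBBx
    have hevpos : 0 < ‖MvPolynomial.eval x P‖ := norm_pos_iff.mpr hxP
    have hcard1 : 1 ≤ ((P^M).support.card : ℝ) := by
      have := Finset.card_pos.mpr (MvPolynomial.support_nonempty.mpr hPM)
      exact_mod_cast this
    have hBBpow : (0:ℝ) < BB ^ ((P^M).totalDegree) := by positivity
    have h2 := Real.log_le_log (by positivity) h1
    rw [Real.log_pow, Real.log_mul (by positivity) (ne_of_gt hBBpow),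
      Real.log_mul (by positivity) (ne_of_gt hcpos), Real.log_pow] at h2
    -- h2 : M * log‖ev‖ ≤ log card + log coeffNorm + deg * log BB
    have hdegle : ((P^M).totalDegree : ℝ) ≤ (M:ℝ) * DP := by
      exact_mod_cast MvPolynomial.totalDegree_pow P M
    have hlogBB : (0:ℝ) ≤ Real.log BB := Real.log_nonneg hBB1
    have hcardle : Real.log ((P^M).support.card) ≤ (M:ℝ) * ((N+1) * (DP+1)) := by
      have hc := support_card_le (P^M)
      have hc2 : (P^M).support.card ≤ ((P^M).totalDegree + 1) ^ (N+1) := by simpa using hc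
      have hc' : ((P^M).support.card : ℝ) ≤ (((P^M).totalDegree + 1 : ℕ) : ℝ) ^ (N+1) := by
        exact_mod_cast hc2
      have h3 := Real.log_le_log (by linarith) hc'
      rw [Real.log_pow] at h3
      have h4 : Real.log (((P^M).totalDegree + 1 : ℕ) : ℝ) ≤ (M:ℝ) * DP + 1 := by
        refine le_trans (Real.log_le_self (by positivity)) ?_
        push_cast
        linarith [hdegle]
      calc Real.log ((P^M).support.card) ≤ (N+1) * Real.log (((P^M).totalDegree + 1 : ℕ) : ℝ) := by
            refine le_trans h3 ?_
            push_cast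
            exact le_refl _
        _ ≤ (N+1) * ((M:ℝ) * DP + 1) := by
            refine mul_le_mul_of_nonneg_left h4 (by positivity)
        _ ≤ (M:ℝ) * ((N+1) * (DP+1)) := by nlinarith [hM0, Nat.cast_nonneg (α := ℝ) DP]
    have hdeglog : ((P^M).totalDegree : ℝ) * Real.log BB ≤ (M:ℝ) * DP * Real.log BB :=
      mul_le_mul_of_nonneg_right hdegle hlogBB
    rw [hLP]
    have := h2
    nlinarith [this, hcardle, hdeglog]
  have habs1 : Real.log (coeffNorm (P ^ M)) ≤ (M:ℝ) * (|UP| + |LP|) := by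
    have : (M:ℝ) * UP ≤ (M:ℝ) * |UP| :=
      mul_le_mul_of_nonneg_left (le_abs_self _) (by linarith)
    have h2 : (0:ℝ) ≤ (M:ℝ) * |LP| := by positivity
    calc Real.log (coeffNorm (P ^ M)) ≤ (M:ℝ) * UP := hupper
      _ ≤ (M:ℝ) * |UP| := this
      _ ≤ (M:ℝ) * (|UP| + |LP|) := by nlinarith
  have habs2 : -(Real.log (coeffNorm (P ^ M))) ≤ (M:ℝ) * (|UP| + |LP|) := by
    have : (M:ℝ) * (-LP) ≤ (M:ℝ) * |LP| :=
      mul_le_mul_of_nonneg_left (neg_le_abs _) (by linarith)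
    have h2 : (0:ℝ) ≤ (M:ℝ) * |UP| := by positivity
    have h3 : -(Real.log (coeffNorm (P ^ M))) ≤ (M:ℝ) * (-LP) := by
      have := hlower
      nlinarith
    calc -(Real.log (coeffNorm (P ^ M))) ≤ (M:ℝ) * (-LP) := h3
      _ ≤ (M:ℝ) * |LP| := this
      _ ≤ (M:ℝ) * (|UP| + |LP|) := by nlinarith
  rw [abs_le]
  constructor
  · linarith [habs2]
  · linarith [habs1]

end NF

end Stmt19Aux

/-- if `D` is an irreducible effective divisor not containing `H` which is
preperiodic under `f_*` (i.e. `f_*^{n+k}D` and `f_*^n D` are supported on the same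
irreducible hypersurface for some `n ≥ 0`, `k ≥ 1`), then
`Δ_f(D) = lim_m λ(f_*^m D)/d^{mN} = 0`. -/
theorem stmt19 {K : Type*} [NormedField K] [CompleteSpace K] [IsAlgClosed K]
    {N d δ : ℕ} (hN : 0 < N) (hd : 2 ≤ d)
    (A : Matrix (Fin N) (Fin N) K) (hdet : A.det = 1) (b : Fin N → K)
    (F : MvPolynomial (Fin (N + 1)) K) (hirr : Irreducible F)
    (hhom : F.IsHomogeneous δ) (hH : resH F ≠ 0)
    (c : ℕ → MvPolynomial (Fin (N + 1)) K) (hc : PushChain A b d F c)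
    (n k : ℕ) (hk : 1 ≤ k)
    (hpre : ∃ (q : MvPolynomial (Fin (N + 1)) K) (a a' : K) (e e' : ℕ),
      Irreducible q ∧ a ≠ 0 ∧ a' ≠ 0 ∧ c n = a • q ^ e ∧ c (n + k) = a' • q ^ e') :
    ∀ l : ℝ, Tendsto (fun m => lamDiv (c m) / (d : ℝ) ^ (N * m)) atTop (nhds l) →
      l = 0 := by
  classical
  intro l hl
  obtain ⟨hc0, hsteps⟩ := hc
  obtain ⟨q, a, a', e, e', hq, ha, ha', hcn, hcnk⟩ := hpre
  have hd0 : 0 < d := by omega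
  have hFne : F ≠ 0 := hirr.ne_zero
  have hFhom : F.IsHomogeneous F.totalDegree := by
    have h1 := hhom.totalDegree hFne
    rw [h1]; exact hhom
  have hchain : ∀ m, c m ≠ 0 ∧ resH (c m) ≠ 0 ∧ (c m).IsHomogeneous ((c m).totalDegree) := by
    intro m
    induction m with
    | zero => rw [hc0]; exact ⟨hFne, hH, hFhom⟩
    | succ m ih =>
      obtain ⟨h1, h2, h3, _⟩ :=
        Stmt19Aux.push_step A hdet b hd0 (hsteps m) ih.1 ih.2.1 ih.2.2
      exact ⟨h1, h2, h3⟩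
  have hdegstep : ∀ m, d * (c (m+1)).totalDegree =
      (Fintype.piFinset (fun _ : Fin N => Polynomial.nthRootsFinset d (1 : K))).card
        * (c m).totalDegree := fun m =>
    (Stmt19Aux.push_step A hdet b hd0 (hsteps m) (hchain m).1 (hchain m).2.1
      (hchain m).2.2).2.2.2
  set Rc := (Fintype.piFinset (fun _ : Fin N => Polynomial.nthRootsFinset d (1 : K))).card with hRc
  have hdegiter : ∀ i, d^i * (c (n+i)).totalDegree = Rc^i * (c n).totalDegree := by
    intro i
    induction i with
    | zero => simp
    | succ i ih =>
      have h1 := hdegstep (n+i)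
      have hidx : n + (i+1) = (n+i) + 1 := by omega
      rw [hidx]
      calc d^(i+1) * (c ((n+i)+1)).totalDegree
          = d^i * (d * (c ((n+i)+1)).totalDegree) := by ring
        _ = d^i * (Rc * (c (n+i)).totalDegree) := by rw [h1]
        _ = Rc * (d^i * (c (n+i)).totalDegree) := by ring
        _ = Rc * (Rc^i * (c n).totalDegree) := by rw [ih]
        _ = Rc^(i+1) * (c n).totalDegree := by ring
  by_cases hDn : (c n).totalDegree = 0
  · -- degenerate case: eventually constant divisors, lamDiv ≡ 0
    have hdeg0 : ∀ i, (c (n+i)).totalDegree = 0 := by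
      intro i
      induction i with
      | zero => simpa using hDn
      | succ i ih =>
        have h1 := hdegstep (n+i)
        rw [ih, mul_zero] at h1
        have hidx : n + (i+1) = (n+i) + 1 := by omega
        rw [hidx]
        rcases Nat.mul_eq_zero.mp h1 with h2 | h2
        · omega
        · exact h2
    have hlam0 : ∀ i, lamDiv (c (n+i)) = 0 := by
      intro i
      have h0 := hdeg0 i
      have hhm : (c (n+i)).IsHomogeneous 0 := by
        have h1 := (hchain (n+i)).2.2
        rwa [h0] at h1
      have hC : c (n+i) = MvPolynomial.C (MvPolynomial.coeff 0 (c (n+i))) := by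
        have h1 : MvPolynomial.homogeneousComponent 0 (c (n+i)) = c (n+i) := by
          rw [MvPolynomial.homogeneousComponent_of_mem
            ((MvPolynomial.mem_homogeneousSubmodule _ _).mpr hhm), if_pos rfl]
        have h2 := MvPolynomial.homogeneousComponent_zero (c (n+i))
        rw [h1] at h2
        exact h2
      unfold lamDiv
      rw [hC, Stmt19Aux.resH_C, sub_self]
    have heq : (fun m => lamDiv (c m) / (d:ℝ)^(N*m)) =ᶠ[atTop] (fun _ => (0:ℝ)) := by
      rw [Filter.EventuallyEq, Filter.eventually_atTop]
      refine ⟨n, fun m hm => ?_⟩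
      obtain ⟨i, rfl⟩ : ∃ i, m = n + i := ⟨m - n, by omega⟩
      rw [hlam0 i, zero_div]
    exact tendsto_nhds_unique (hl.congr' heq) tendsto_const_nhds
  · -- main case
    have hDn1 : 1 ≤ (c n).totalDegree := Nat.one_le_iff_ne_zero.mpr hDn
    have hRc1 : 1 ≤ Rc := by
      rw [hRc]
      exact Finset.card_pos.mpr ⟨fun _ => 1, Fintype.mem_piFinset.mpr
        fun i => Polynomial.one_mem_nthRootsFinset hd0⟩
    have hRcle : Rc ≤ d^N := by
      rw [hRc, Fintype.card_piFinset]
      have hcard : (Polynomial.nthRootsFinset d (1 : K)).card ≤ d := by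
        rw [Polynomial.nthRootsFinset_def]
        exact le_trans (Multiset.toFinset_card_le _)
          (by simpa using Polynomial.card_nthRoots d (1:K))
      calc ∏ _i : Fin N, (Polynomial.nthRootsFinset d (1 : K)).card
          = (Polynomial.nthRootsFinset d (1 : K)).card ^ N := by
            rw [Finset.prod_const]; simp
        _ ≤ d^N := Nat.pow_le_pow_left hcard N
    have he1 : 1 ≤ e := by
      rcases Nat.eq_zero_or_pos e with h0 | h1
      · exfalso
        apply hDn
        rw [hcn, h0, pow_zero, MvPolynomial.smul_eq_C_mul, mul_one,
          MvPolynomial.totalDegree_C]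
      · exact h1
    have hDnk1 : 1 ≤ (c (n+k)).totalDegree := by
      have h1 := hdegiter k
      have h2 : 1 ≤ Rc^k := Nat.one_le_pow _ _ (by omega)
      rcases Nat.eq_zero_or_pos ((c (n+k)).totalDegree) with h0 | hpos
      · exfalso
        rw [h0, mul_zero] at h1
        have h5 := Nat.mul_le_mul h2 hDn1
        rw [← h1] at h5
        simpa using h5
      · exact hpos
    have he'1 : 1 ≤ e' := by
      rcases Nat.eq_zero_or_pos e' with h0 | h1
      · exfalso
        have h2 : (c (n+k)).totalDegree = 0 := by
          rw [hcnk, h0, pow_zero, MvPolynomial.smul_eq_C_mul, mul_one,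
            MvPolynomial.totalDegree_C]
        omega
      · exact h1
    have hqne : q ≠ 0 := hq.ne_zero
    have hrne : resH q ≠ 0 := by
      have h1 := (hchain n).2.1
      rw [hcn, MvPolynomial.smul_eq_C_mul, Stmt19Aux.resH_C_mul, Stmt19Aux.resH_pow] at h1
      intro h0
      rw [h0, zero_pow (by omega : e ≠ 0), mul_zero] at h1
      exact h1 rfl
    have hinj := Stmt19Aux.aeval_fForms_injective A hdet b hd0
    -- Step 2: pushforwards of the power relation
    have step2 : ∀ j, ∃ γ : K, γ ≠ 0 ∧ (c (n+j))^e' = MvPolynomial.C γ * (c (n+k+j))^e := by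
      intro j
      induction j with
      | zero =>
        refine ⟨a^e' * (a'^e)⁻¹, mul_ne_zero (pow_ne_zero _ ha)
          (inv_ne_zero (pow_ne_zero _ ha')), ?_⟩
        simp only [Nat.add_zero]
        rw [hcn, hcnk, MvPolynomial.smul_eq_C_mul, MvPolynomial.smul_eq_C_mul,
          mul_pow, mul_pow, ← MvPolynomial.C_pow, ← MvPolynomial.C_pow,
          ← pow_mul, ← pow_mul, mul_comm e' e, ← mul_assoc, ← map_mul,
          inv_mul_cancel_right₀ (pow_ne_zero _ ha')]
      | succ j ihj =>
        obtain ⟨γj, hγj, hrel⟩ := ihj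
        obtain ⟨γ1, hγ1, h1⟩ := hsteps (n+j)
        obtain ⟨γ2, hγ2, h2⟩ := hsteps (n+k+j)
        rw [MvPolynomial.smul_eq_C_mul] at h1 h2
        refine ⟨γ1^e' * γj^Rc * (γ2^e)⁻¹, mul_ne_zero (mul_ne_zero (pow_ne_zero _ hγ1)
          (pow_ne_zero _ hγj)) (inv_ne_zero (pow_ne_zero _ hγ2)), ?_⟩
        apply hinj
        show MvPolynomial.aeval (fForms A b d) ((c (n+(j+1)))^e')
          = MvPolynomial.aeval (fForms A b d)
            (MvPolynomial.C (γ1^e' * γj^Rc * (γ2^e)⁻¹) * (c (n+k+(j+1)))^e)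
        have hidx1 : n + (j+1) = (n+j) + 1 := by omega
        have hidx2 : n + k + (j+1) = (n+k+j) + 1 := by omega
        rw [hidx1, hidx2, map_pow, map_mul, map_pow, h1, h2, MvPolynomial.aeval_C,
          MvPolynomial.algebraMap_eq]
        rw [mul_pow, mul_pow, ← MvPolynomial.C_pow, ← MvPolynomial.C_pow,
          ← Finset.prod_pow, ← Finset.prod_pow]
        have hLp : ∀ ζ ∈ (Fintype.piFinset (fun _ : Fin N => Polynomial.nthRootsFinset d (1 : K))),
            (twist ζ (c (n+j)))^e' = MvPolynomial.C γj * twist ζ ((c (n+k+j))^e) := by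
          intro ζ _
          rw [← Stmt19Aux.twist_pow, hrel, Stmt19Aux.twist_C_mul]
        have hRp : ∀ ζ ∈ (Fintype.piFinset (fun _ : Fin N => Polynomial.nthRootsFinset d (1 : K))),
            (twist ζ (c (n+k+j)))^e = twist ζ ((c (n+k+j))^e) :=
          fun ζ _ => (Stmt19Aux.twist_pow _ _ _).symm
        rw [Finset.prod_congr rfl hLp, Finset.prod_congr rfl hRp, Finset.prod_mul_distrib,
          Finset.prod_const, ← MvPolynomial.C_pow, ← hRc]
        rw [← mul_assoc, ← map_mul, ← mul_assoc, ← map_mul,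
          inv_mul_cancel_right₀ (pow_ne_zero _ hγ2)]
    -- Step 3: c (n + s*k) is a scalar times a power of q
    have hqprime : Prime q := UniqueFactorizationMonoid.irreducible_iff_prime.mp hq
    have step3 : ∀ s : ℕ, ∃ (α : K) (M : ℕ), α ≠ 0 ∧ c (n + s*k) = MvPolynomial.C α * q^M
        ∧ M * e^s = e * e'^s := by
      intro s
      induction s with
      | zero =>
        refine ⟨a, e, ha, ?_, by ring⟩
        simpa [MvPolynomial.smul_eq_C_mul] using hcn
      | succ s ihs =>
        obtain ⟨α, M, hα, hcM, hMe⟩ := ihs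
        obtain ⟨γ, hγ, hrel⟩ := step2 (s*k)
        have hidx : n + k + s*k = n + (s+1)*k := by ring
        rw [hidx, hcM] at hrel
        have hYe : (c (n+(s+1)*k))^e = MvPolynomial.C (γ⁻¹ * α^e') * q^(M*e') := by
          have h1 : MvPolynomial.C γ * (c (n+(s+1)*k))^e
              = MvPolynomial.C (α^e') * q^(M*e') := by
            rw [← hrel, mul_pow, ← MvPolynomial.C_pow, ← pow_mul]
          calc (c (n+(s+1)*k))^e
              = MvPolynomial.C γ⁻¹ * (MvPolynomial.C γ * (c (n+(s+1)*k))^e) := by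
                rw [← mul_assoc, ← map_mul, inv_mul_cancel₀ hγ, map_one, one_mul]
            _ = MvPolynomial.C γ⁻¹ * (MvPolynomial.C (α^e') * q^(M*e')) := by rw [h1]
            _ = MvPolynomial.C (γ⁻¹ * α^e') * q^(M*e') := by rw [← mul_assoc, ← map_mul]
        have hsc_ne : γ⁻¹ * α^e' ≠ 0 := mul_ne_zero (inv_ne_zero hγ) (pow_ne_zero _ hα)
        have hYdvd : c (n+(s+1)*k) ∣ q^(M*e') := by
          have h1 : c (n+(s+1)*k) ∣ (c (n+(s+1)*k))^e := dvd_pow_self _ (by omega : e ≠ 0)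
          have h2 : q^(M*e') = MvPolynomial.C (γ⁻¹ * α^e')⁻¹ * (c (n+(s+1)*k))^e := by
            rw [hYe, ← mul_assoc, ← map_mul, inv_mul_cancel₀ hsc_ne, map_one, one_mul]
          rw [h2]
          exact Dvd.dvd.mul_left h1 _
        obtain ⟨i, hiE, hassoc⟩ := (dvd_prime_pow hqprime _).mp hYdvd
        obtain ⟨w, hw⟩ := hassoc
        obtain ⟨β, hβ, hβeq⟩ := Stmt19Aux.isUnit_eq_C (w⁻¹ : (MvPolynomial (Fin (N+1)) K)ˣ).isUnit
        have hY : c (n+(s+1)*k) = MvPolynomial.C β * q^i := by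
          have h1 : c (n+(s+1)*k) = q^i * (↑w⁻¹ : MvPolynomial (Fin (N+1)) K) := by
            rw [← hw, mul_assoc]
            rw [Units.mul_inv, mul_one]
          rw [h1, hβeq, mul_comm]
        have hCunit : ∀ (y : K), y ≠ 0 →
            IsUnit (MvPolynomial.C y : MvPolynomial (Fin (N+1)) K) := fun y hy =>
          IsUnit.map (MvPolynomial.C : K →+* MvPolynomial (Fin (N+1)) K)
            (isUnit_iff_ne_zero.mpr hy)
        have hie : i * e = M * e' := by
          have hYe2 : MvPolynomial.C (β^e) * q^(i*e) = MvPolynomial.C (γ⁻¹*α^e') * q^(M*e') := by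
            rw [← hYe, hY, mul_pow, ← MvPolynomial.C_pow, ← pow_mul]
          rcases lt_trichotomy (i*e) (M*e') with hlt | heqq | hgt
          · exfalso
            have h2 : q^(i*e) * MvPolynomial.C (β^e)
                = q^(i*e) * (MvPolynomial.C (γ⁻¹*α^e') * q^(M*e'-i*e)) := by
              calc q^(i*e) * MvPolynomial.C (β^e) = MvPolynomial.C (β^e) * q^(i*e) :=
                    mul_comm _ _
                _ = MvPolynomial.C (γ⁻¹*α^e') * q^(M*e') := hYe2
                _ = MvPolynomial.C (γ⁻¹*α^e') * (q^(i*e) * q^(M*e'-i*e)) := by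
                    rw [← pow_add, Nat.add_sub_cancel' hlt.le]
                _ = q^(i*e) * (MvPolynomial.C (γ⁻¹*α^e') * q^(M*e'-i*e)) := by ring
            have h3 := mul_left_cancel₀ (pow_ne_zero _ hqne) h2
            have h4 : q ∣ MvPolynomial.C (β^e) := by
              rw [h3]
              exact Dvd.dvd.mul_left (dvd_pow_self q (by omega : M*e'-i*e ≠ 0)) _
            exact hq.not_isUnit (isUnit_of_dvd_unit h4 (hCunit _ (pow_ne_zero _ hβ)))
          · exact heqq
          · exfalso
            have h2 : q^(M*e') * MvPolynomial.C (γ⁻¹*α^e')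
                = q^(M*e') * (MvPolynomial.C (β^e) * q^(i*e-M*e')) := by
              calc q^(M*e') * MvPolynomial.C (γ⁻¹*α^e')
                  = MvPolynomial.C (γ⁻¹*α^e') * q^(M*e') := mul_comm _ _
                _ = MvPolynomial.C (β^e) * q^(i*e) := hYe2.symm
                _ = MvPolynomial.C (β^e) * (q^(M*e') * q^(i*e-M*e')) := by
                    rw [← pow_add, Nat.add_sub_cancel' hgt.le]
                _ = q^(M*e') * (MvPolynomial.C (β^e) * q^(i*e-M*e')) := by ring
            have h3 := mul_left_cancel₀ (pow_ne_zero _ hqne) h2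
            have h4 : q ∣ MvPolynomial.C (γ⁻¹*α^e') := by
              rw [h3]
              exact Dvd.dvd.mul_left (dvd_pow_self q (by omega : i*e-M*e' ≠ 0)) _
            exact hq.not_isUnit (isUnit_of_dvd_unit h4 (hCunit _ hsc_ne))
        refine ⟨β, i, hβ, hY, ?_⟩
        have h5 : i * e^(s+1) = (i*e)*e^s := by ring
        rw [h5, hie]
        calc M*e' * e^s = (M*e^s)*e' := by ring
          _ = (e*e'^s)*e' := by rw [hMe]
          _ = e * e'^(s+1) := by ring
    -- pick an evaluation point where q and resH q do not vanish
    have hprodne : q * resH q ≠ 0 := mul_ne_zero hqne hrne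
    have hxex : ∃ x : Fin (N+1) → K, MvPolynomial.eval x (q * resH q) ≠ 0 := by
      by_contra h
      push_neg at h
      apply hprodne
      apply MvPolynomial.funext
      intro xx
      rw [h xx, map_zero]
    obtain ⟨x, hxne⟩ := hxex
    rw [map_mul] at hxne
    obtain ⟨hxq, hxr⟩ := mul_ne_zero_iff.mp hxne
    set BB : ℝ := 1 + ∑ i, ‖x i‖ with hBBdef
    have hsum0 : 0 ≤ ∑ i, ‖x i‖ := Finset.sum_nonneg fun i _ => norm_nonneg _
    have hBB1 : 1 ≤ BB := by rw [hBBdef]; linarith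
    have hBBx : ∀ i, ‖x i‖ ≤ BB := by
      intro i
      have h1 : ‖x i‖ ≤ ∑ j, ‖x j‖ :=
        Finset.single_le_sum (fun j _ => norm_nonneg (x j)) (Finset.mem_univ i)
      rw [hBBdef]; linarith
    obtain ⟨Cq, hCq⟩ := Stmt19Aux.keybound x hBB1 hBBx q hqne hxq
    obtain ⟨Cr, hCr⟩ := Stmt19Aux.keybound x hBB1 hBBx (resH q) hrne hxr
    have hCq0 : 0 ≤ Cq := by
      have h := hCq 1 le_rfl
      rw [Nat.cast_one, one_mul] at h
      exact le_trans (abs_nonneg _) h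
    have hCr0 : 0 ≤ Cr := by
      have h := hCr 1 le_rfl
      rw [Nat.cast_one, one_mul] at h
      exact le_trans (abs_nonneg _) h
    -- the degree comparison
    have hdeq : (c n).totalDegree * e' = (c (n+k)).totalDegree * e := by
      obtain ⟨γ, hγ, hrel⟩ := step2 0
      simp only [Nat.add_zero] at hrel
      have hL : ((c n)^e').IsHomogeneous ((c n).totalDegree * e') := (hchain n).2.2.pow e'
      have hr2 : ((c n)^e').IsHomogeneous ((c (n+k)).totalDegree * e) := by
        rw [hrel]
        exact ((hchain (n+k)).2.2.pow e).C_mul γ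
      exact hL.inj_right hr2 (pow_ne_zero _ (hchain n).1)
    have hkey : e' * d^k = e * Rc^k := by
      have h1 := hdegiter k
      have h2 : (c n).totalDegree * (e' * d^k) = (c n).totalDegree * (e * Rc^k) := by
        calc (c n).totalDegree * (e' * d^k) = ((c n).totalDegree * e') * d^k := by ring
          _ = ((c (n+k)).totalDegree * e) * d^k := by rw [hdeq]
          _ = e * (d^k * (c (n+k)).totalDegree) := by ring
          _ = e * (Rc^k * (c n).totalDegree) := by rw [h1]
          _ = (c n).totalDegree * (e * Rc^k) := by ring
      exact Nat.eq_of_mul_eq_mul_left (by omega) h2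
    have he'lt : e' < e * d^(N*k) := by
      have h1 : Rc^k ≤ (d^N)^k := Nat.pow_le_pow_left hRcle k
      have h2 : e' * d^k ≤ e * d^(N*k) := by
        calc e' * d^k = e * Rc^k := hkey
          _ ≤ e * (d^N)^k := Nat.mul_le_mul_left _ h1
          _ = e * d^(N*k) := by rw [← pow_mul]
      have h3 : 2 ≤ d^k := le_trans hd (Nat.le_self_pow (by omega) d)
      have h4 : e' * 2 ≤ e * d^(N*k) := le_trans (Nat.mul_le_mul_left _ h3) h2
      calc e' < e' * 2 := by omega
        _ ≤ e * d^(N*k) := h4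
    -- limit along the subsequence s ↦ n + s*k
    set ρ : ℝ := (e':ℝ) / ((e:ℝ) * (d:ℝ)^(N*k)) with hρdef
    have hepos : (0:ℝ) < (e:ℝ) := by exact_mod_cast (by omega : 0 < e)
    have hdpos : (0:ℝ) < (d:ℝ) := by exact_mod_cast (by omega : 0 < d)
    have hdenpos : (0:ℝ) < (e:ℝ) * (d:ℝ)^(N*k) := by positivity
    have hρ0 : 0 ≤ ρ := by rw [hρdef]; positivity
    have hρ1 : ρ < 1 := by
      rw [hρdef, div_lt_one hdenpos]
      have := he'lt
      push_cast
      exact_mod_cast this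
    have hcomp : Tendsto (fun s : ℕ => n + s*k) atTop atTop := by
      refine tendsto_atTop_mono (fun s => ?_) tendsto_id
      have h1 : s ≤ s*k := Nat.le_mul_of_pos_right s (by omega)
      show s ≤ n + s*k
      omega
    have hsub : Tendsto (fun s : ℕ => lamDiv (c (n+s*k)) / (d:ℝ)^(N*(n+s*k)))
        atTop (nhds l) := hl.comp hcomp
    have hbound : ∀ s : ℕ, ‖lamDiv (c (n+s*k)) / (d:ℝ)^(N*(n+s*k))‖
        ≤ ((Cq+Cr) * e / (d:ℝ)^(N*n)) * ρ^s := by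
      intro s
      obtain ⟨α, M, hα, hcM, hMe⟩ := step3 s
      have hM1 : 1 ≤ M := by
        rcases Nat.eq_zero_or_pos M with h0 | h1
        · exfalso
          rw [h0, zero_mul] at hMe
          have h2 : 0 < e * e'^s :=
            Nat.mul_pos (by omega) (Nat.pow_pos (by omega))
          rw [← hMe] at h2
          exact absurd h2 (lt_irrefl 0)
        · exact h1
      have hlameq : lamDiv (c (n+s*k))
          = Real.log (coeffNorm (q^M)) - Real.log (coeffNorm ((resH q)^M)) := by
        unfold lamDiv
        rw [hcM, Stmt19Aux.resH_C_mul, Stmt19Aux.resH_pow,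
          Stmt19Aux.coeffNorm_C_mul hα, Stmt19Aux.coeffNorm_C_mul hα,
          Real.log_mul (norm_ne_zero_iff.mpr hα)
            (Stmt19Aux.coeffNorm_ne_zero (pow_ne_zero _ hqne)),
          Real.log_mul (norm_ne_zero_iff.mpr hα)
            (Stmt19Aux.coeffNorm_ne_zero (pow_ne_zero _ hrne))]
        ring
      have h2 : |Real.log (coeffNorm (q^M)) - Real.log (coeffNorm ((resH q)^M))|
          ≤ M * (Cq + Cr) := by
        have hq1 := hCq M hM1
        have hr1 := hCr M hM1
        have h3 : |Real.log (coeffNorm (q^M)) - Real.log (coeffNorm ((resH q)^M))|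
            ≤ |Real.log (coeffNorm (q^M))| + |Real.log (coeffNorm ((resH q)^M))| :=
          abs_sub _ _
        calc |Real.log (coeffNorm (q^M)) - Real.log (coeffNorm ((resH q)^M))|
            ≤ |Real.log (coeffNorm (q^M))| + |Real.log (coeffNorm ((resH q)^M))| := h3
          _ ≤ M * Cq + M * Cr := add_le_add hq1 hr1
          _ = M * (Cq + Cr) := by ring
      have hpow_split : (d:ℝ)^(N*(n+s*k)) = (d:ℝ)^(N*n) * ((d:ℝ)^(N*k))^s := by
        rw [← pow_mul, ← pow_add]
        congr 1
        ring
      have hdppos : (0:ℝ) < (d:ℝ)^(N*(n+s*k)) := by positivity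
      have hMcast : (M:ℝ) * (e:ℝ)^s = (e:ℝ) * (e':ℝ)^s := by exact_mod_cast hMe
      have he0 : (e:ℝ) ≠ 0 := ne_of_gt hepos
      have hd0' : (d:ℝ) ≠ 0 := ne_of_gt hdpos
      have hMval : (M:ℝ) = (e:ℝ) * (e':ℝ)^s / (e:ℝ)^s := by
        rw [eq_div_iff (pow_ne_zero _ he0)]
        exact hMcast
      have hMd : (M:ℝ) / (d:ℝ)^(N*(n+s*k)) = ((e:ℝ) / (d:ℝ)^(N*n)) * ρ^s := by
        rw [hpow_split, hρdef, div_pow, mul_pow, hMval]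
        field_simp
      rw [hlameq, Real.norm_eq_abs, abs_div, abs_of_pos hdppos]
      calc |Real.log (coeffNorm (q^M)) - Real.log (coeffNorm ((resH q)^M))|
            / (d:ℝ)^(N*(n+s*k))
          ≤ (M * (Cq + Cr)) / (d:ℝ)^(N*(n+s*k)) := by
            exact (div_le_div_iff_of_pos_right hdppos).mpr h2
        _ = (Cq+Cr) * ((M:ℝ)/(d:ℝ)^(N*(n+s*k))) := by ring
        _ = (Cq+Cr) * (((e:ℝ)/(d:ℝ)^(N*n)) * ρ^s) := by rw [hMd]
        _ = ((Cq+Cr) * e / (d:ℝ)^(N*n)) * ρ^s := by ring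
    have hzero : Tendsto (fun s : ℕ => lamDiv (c (n+s*k)) / (d:ℝ)^(N*(n+s*k)))
        atTop (nhds 0) := by
      have h1 : Tendsto (fun s : ℕ => ((Cq+Cr) * e / (d:ℝ)^(N*n)) * ρ^s) atTop (nhds 0) := by
        have h2 := (tendsto_pow_atTop_nhds_zero_of_lt_one hρ0 hρ1).const_mul
          ((Cq+Cr) * (e:ℝ) / (d:ℝ)^(N*n))
        simpa using h2
      exact squeeze_zero_norm hbound h1
    exact tendsto_nhds_unique hsub hzero
end
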